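/- arXiv:1705.10499 — 6 statements merged into one kernel-verified Lean document; each statement's English description precedes it below -/
import Mathlib

section
/- (SC-AdaNGD_2, smooth case: linear rate.) Let H > 0, let f : ℝ^d → ℝ be differentiable, H-strongly convex and β-smooth with ‖∇f(x)‖ ≤ G for all x ∈ K, and suppose the global minimizer x* := argmin_{x ∈ ℝ^d} f(x) belongs to K. Assume moreover e^{(H/β)T} ≥ 3. Let x_1, …, x_T and x̄_T be the SC-AdaNGD_k iterates and output with k = 2, with g_t := ∇f(x_t) ≠ 0 for all t = 1, …, T. Then f(x̄_T) − min_{x ∈ K} f(x) ≤ (3G² / (2H)) · e^{−(H/β)T} · (1 + (H/β)T). -/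
lemma proj_nonexp {F : Type*} [NormedAddCommGroup F] [InnerProductSpace ℝ F]
    [CompleteSpace F] {K : Set F} (hKconv : Convex ℝ K)
    (proj : F → F)
    (hproj_mem : ∀ y, proj y ∈ K)
    (hproj_min : ∀ y, ∀ z ∈ K, ‖proj y - y‖ ≤ ‖z - y‖)
    (y z : F) (hz : z ∈ K) : ‖proj y - z‖ ≤ ‖y - z‖ := by
  haveI : Nonempty K := ⟨⟨z, hz⟩⟩
  have hinf : ‖y - proj y‖ = ⨅ w : K, ‖y - w‖ := by
    apply le_antisymm
    · apply le_ciInf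
      intro w
      have h := hproj_min y w w.2
      rw [norm_sub_rev (proj y) y, norm_sub_rev (w : F) y] at h
      exact h
    · apply ciInf_le _ (⟨proj y, hproj_mem y⟩ : K)
      refine ⟨0, ?_⟩
      rintro r ⟨w, rfl⟩
      exact norm_nonneg _
  have hchar := (norm_eq_iInf_iff_real_inner_le_zero hKconv (hproj_mem y)).mp hinf z hz
  have hdecomp : ‖y - z‖ ^ 2 = ‖y - proj y‖ ^ 2 + 2 * (inner ℝ (y - proj y) (proj y - z) : ℝ)
      + ‖proj y - z‖ ^ 2 := by
    have h1 : y - z = (y - proj y) + (proj y - z) := by abel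
    rw [h1, norm_add_sq_real]
  have h2 : (inner ℝ (y - proj y) (proj y - z) : ℝ) = -(inner ℝ (y - proj y) (z - proj y) : ℝ) := by
    rw [← inner_neg_right]; congr 1; abel
  nlinarith [norm_nonneg (y - proj y), norm_nonneg (proj y - z), norm_nonneg (y - z),
    sq_nonneg ‖y - proj y‖]

lemma phi_mono {u v : ℝ} (hv : 1 ≤ v) (hu : v ≤ u) :
    v * (1 + Real.log u) ≤ u * (1 + Real.log v) := by
  have hv0 : 0 < v := lt_of_lt_of_le one_pos hv
  have hu0 : 0 < u := lt_of_lt_of_le hv0 hu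
  have hlv : 0 ≤ Real.log v := Real.log_nonneg hv
  have h1 : Real.log u = Real.log v + Real.log (u / v) := by
    rw [Real.log_div (ne_of_gt hu0) (ne_of_gt hv0)]; ring
  have h2 : Real.log (u / v) ≤ u / v - 1 := Real.log_le_sub_one_of_pos (by positivity)
  have h3 : v * Real.log (u / v) ≤ u - v := by
    calc v * Real.log (u/v) ≤ v * (u / v - 1) := mul_le_mul_of_nonneg_left h2 (le_of_lt hv0)
      _ = u - v := by field_simp
  nlinarith [mul_nonneg (sub_nonneg.mpr hu) hlv]

set_option maxHeartbeats 2000000 in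
theorem sc_adangd_two_smooth
    {d : ℕ} (T : ℕ) (hT : 1 ≤ T) (H G β : ℝ) (hH : 0 < H)
    (K : Set (EuclideanSpace ℝ (Fin d)))
    (hKne : K.Nonempty) (hKcl : IsClosed K) (hKbdd : Bornology.IsBounded K)
    (hKconv : Convex ℝ K)
    (proj : EuclideanSpace ℝ (Fin d) → EuclideanSpace ℝ (Fin d))
    (hproj_mem : ∀ y, proj y ∈ K)
    (hproj_min : ∀ y, ∀ z ∈ K, ‖proj y - y‖ ≤ ‖z - y‖)
    (f : EuclideanSpace ℝ (Fin d) → ℝ)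
    (hdiff : Differentiable ℝ f)
    (hsc : ∀ x y, f x + (inner ℝ (gradient f x) (y - x) : ℝ) + (H / 2) * ‖x - y‖ ^ 2 ≤ f y)
    (hsmooth : ∀ x y, f y ≤ f x + (inner ℝ (gradient f x) (y - x) : ℝ) + (β / 2) * ‖x - y‖ ^ 2)
    (hG : ∀ x ∈ K, ‖gradient f x‖ ≤ G)
    (xstar : EuclideanSpace ℝ (Fin d)) (hxstarK : xstar ∈ K)
    (hmin : ∀ y, f xstar ≤ f y)
    (hexp : 3 ≤ Real.exp ((H / β) * T))
    (x : ℕ → EuclideanSpace ℝ (Fin d)) (g : ℕ → EuclideanSpace ℝ (Fin d)) (η : ℕ → ℝ)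
    (hx1 : x 1 ∈ K)
    (hg : ∀ t, g t = gradient f (x t))
    (hgne : ∀ t ∈ Finset.Icc 1 T, g t ≠ 0)
    (hη : ∀ t, η t = 1 / (H * ∑ τ ∈ Finset.Icc 1 t, (‖g τ‖ ^ 2)⁻¹))
    (hupd : ∀ t ∈ Finset.Icc 1 T, x (t + 1) = proj (x t - (η t / ‖g t‖ ^ 2) • g t))
    (xbar : EuclideanSpace ℝ (Fin d))
    (hxbar : xbar = ∑ t ∈ Finset.Icc 1 T, (((‖g t‖ ^ 2)⁻¹) / ∑ τ ∈ Finset.Icc 1 T, (‖g τ‖ ^ 2)⁻¹) • x t)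
    :
    ∀ xs ∈ K,
      f xbar - f xs ≤
        (3 * G ^ 2 / (2 * H)) * Real.exp (-(H / β) * T) * (1 + (H / β) * T) := by
  intro xs hxs
  -- basic setup
  set a : ℕ → ℝ := fun t => (‖g t‖ ^ 2)⁻¹ with ha
  set S : ℕ → ℝ := fun t => ∑ τ ∈ Finset.Icc 1 t, a τ with hSdef
  set D : ℕ → ℝ := fun t => f (x t) - f xstar with hD
  -- positivity of β
  have hg1ne : g 1 ≠ 0 := hgne 1 (Finset.mem_Icc.mpr ⟨le_refl 1, hT⟩)
  have hn1 : (0:ℝ) < ‖(0 : EuclideanSpace ℝ (Fin d)) - g 1‖ ^ 2 := by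
    rw [zero_sub, norm_neg]
    have h := norm_pos_iff.mpr hg1ne
    exact pow_pos h 2
  have hβ : 0 < β := by
    have h1 := hsc 0 (g 1)
    have h2 := hsmooth 0 (g 1)
    nlinarith [h1, h2, hn1, hH]
  -- iterates stay in K
  have hmem : ∀ t : ℕ, 1 ≤ t → t ≤ T → x t ∈ K := by
    intro t h1
    induction t, h1 using Nat.le_induction with
    | base => intro _; exact hx1
    | succ n hn ih =>
      intro hns
      have hnT : n ≤ T := Nat.le_of_succ_le hns
      rw [hupd n (Finset.mem_Icc.mpr ⟨hn, hnT⟩)]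
      exact hproj_mem _
  have hgpos : ∀ t ∈ Finset.Icc 1 T, 0 < ‖g t‖ := fun t ht => norm_pos_iff.mpr (hgne t ht)
  have hapos : ∀ t ∈ Finset.Icc 1 T, 0 < a t := by
    intro t ht
    have h := hgpos t ht
    simp only [ha]
    exact inv_pos.mpr (pow_pos h 2)
  have hSpos : ∀ t ∈ Finset.Icc 1 T, 0 < S t := by
    intro t ht
    rw [Finset.mem_Icc] at ht
    apply Finset.sum_pos
    · intro τ hτ
      exact hapos τ (Finset.Icc_subset_Icc_right ht.2 hτ)
    · exact ⟨1, Finset.mem_Icc.mpr ⟨le_refl 1, ht.1⟩⟩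
  have hTmem : T ∈ Finset.Icc 1 T := Finset.mem_Icc.mpr ⟨hT, le_refl T⟩
  have hST : 0 < S T := hSpos T hTmem
  have ha1 : 0 < a 1 := hapos 1 (Finset.mem_Icc.mpr ⟨le_refl 1, hT⟩)
  have hSrec : ∀ i : ℕ, S (i + 1) = S i + a (i + 1) := by
    intro i
    simp only [hSdef]
    exact Finset.sum_Icc_succ_top (Nat.le_add_left 1 i) a
  have hS0 : S 0 = 0 := by simp [hSdef]
  have hIcc : ∀ h : ℕ → ℝ, ∑ t ∈ Finset.Icc 1 T, h t = ∑ i ∈ Finset.range T, h (i + 1) := by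
    intro h
    rw [← Finset.Ico_add_one_right_eq_Icc, Finset.sum_Ico_eq_sum_range]
    exact Finset.sum_congr rfl fun i _ => by rw [Nat.add_comm]
  have hmemIcc : ∀ i : ℕ, i ∈ Finset.range T → i + 1 ∈ Finset.Icc 1 T := by
    intro i hi
    rw [Finset.mem_range] at hi
    exact Finset.mem_Icc.mpr ⟨Nat.le_add_left 1 i, hi⟩
  -- the sum in hη / hxbar equals S
  have hSbridge : ∀ t : ℕ, (∑ τ ∈ Finset.Icc 1 t, (‖g τ‖ ^ 2)⁻¹) = S t := by
    intro t; simp [hSdef, ha]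
  -- Step lower bound: smoothness gives a t * D t ≥ 1/(2β)
  have hlow : ∀ t ∈ Finset.Icc 1 T, 1 / (2 * β) ≤ a t * D t := by
    intro t ht
    have hgt := hgpos t ht
    have hs := hsmooth (x t) (x t - (1 / β) • g t)
    rw [← hg t] at hs
    have e1 : (x t - (1 / β) • g t) - x t = -((1 / β) • g t) := by abel
    rw [e1] at hs
    have e2 : (inner ℝ (g t) (-((1 / β) • g t)) : ℝ) = -(1 / β) * ‖g t‖ ^ 2 := by
      rw [inner_neg_right, real_inner_smul_right, real_inner_self_eq_norm_sq]; ring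
    rw [e2] at hs
    have e3 : ‖x t - (x t - (1 / β) • g t)‖ ^ 2 = (1 / β) ^ 2 * ‖g t‖ ^ 2 := by
      have h1 : x t - (x t - (1 / β) • g t) = (1 / β) • g t := by abel
      rw [h1, norm_smul, mul_pow, Real.norm_eq_abs, sq_abs]
    rw [e3] at hs
    have hmin' := hmin (x t - (1 / β) • g t)
    have hcalc : f (x t) + -(1 / β) * ‖g t‖ ^ 2 + β / 2 * ((1 / β) ^ 2 * ‖g t‖ ^ 2)
        = f (x t) - ‖g t‖ ^ 2 / (2 * β) := by
      field_simp
      ring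
    rw [hcalc] at hs
    have hkey : ‖g t‖ ^ 2 / (2 * β) ≤ D t := by
      simp only [hD]
      linarith [hs, hmin']
    have hag : a t * ‖g t‖ ^ 2 = 1 := by
      simp only [ha]
      exact inv_mul_cancel₀ (pow_pos hgt 2).ne'
    have hat := hapos t ht
    calc 1 / (2 * β) = a t * (‖g t‖ ^ 2 / (2 * β)) := by
          rw [← mul_div_assoc, hag]
      _ ≤ a t * D t := mul_le_mul_of_nonneg_left hkey hat.le
  -- per-step regret bound
  set b : ℕ → ℝ := fun i => S i * ‖x (i + 1) - xstar‖ ^ 2 with hb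
  have hstep : ∀ i ∈ Finset.range T, a (i + 1) * D (i + 1) ≤
      (H / 2) * (b i - b (i + 1)) + (1 / (2 * H)) * (a (i + 1) / S (i + 1)) := by
    intro i hi
    have htI := hmemIcc i hi
    have hgt := hgpos (i + 1) htI
    have hat := hapos (i + 1) htI
    have hSt := hSpos (i + 1) htI
    have hProj : ‖x (i + 1 + 1) - xstar‖ ≤
        ‖(x (i + 1) - (η (i + 1) / ‖g (i + 1)‖ ^ 2) • g (i + 1)) - xstar‖ := by
      rw [hupd (i + 1) htI]
      exact proj_nonexp hKconv proj hproj_mem hproj_min _ xstar hxstarK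
    set c : ℝ := η (i + 1) / ‖g (i + 1)‖ ^ 2 with hcdef
    have hc : c * (H * S (i + 1)) = a (i + 1) := by
      rw [hcdef, hη (i + 1), hSbridge]
      simp only [ha]
      field_simp [hH.ne', hSt.ne', (pow_pos hgt 2).ne']
    have hcpos : 0 < c := by nlinarith [hc, hat, mul_pos hH hSt]
    have hgsq : a (i + 1) * ‖g (i + 1)‖ ^ 2 = 1 := by
      simp only [ha]
      exact inv_mul_cancel₀ (pow_pos hgt 2).ne'
    have hexp1 : ‖(x (i + 1) - c • g (i + 1)) - xstar‖ ^ 2 =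
        ‖x (i + 1) - xstar‖ ^ 2 - 2 * c * (inner ℝ (g (i + 1)) (x (i + 1) - xstar) : ℝ)
          + c ^ 2 * ‖g (i + 1)‖ ^ 2 := by
      have h1 : (x (i + 1) - c • g (i + 1)) - xstar = (x (i + 1) - xstar) - c • g (i + 1) := by
        abel
      rw [h1, norm_sub_sq_real, real_inner_smul_right, norm_smul, mul_pow, Real.norm_eq_abs,
        sq_abs, real_inner_comm (x (i + 1) - xstar) (g (i + 1))]
      ring
    have hsq : ‖x (i + 1 + 1) - xstar‖ ^ 2 ≤
        ‖x (i + 1) - xstar‖ ^ 2 - 2 * c * (inner ℝ (g (i + 1)) (x (i + 1) - xstar) : ℝ)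
          + c ^ 2 * ‖g (i + 1)‖ ^ 2 := by
      rw [← hexp1]
      exact pow_le_pow_left₀ (norm_nonneg _) hProj 2
    have hscT := hsc (x (i + 1)) xstar
    rw [← hg (i + 1)] at hscT
    have hflip : (inner ℝ (g (i + 1)) (xstar - x (i + 1)) : ℝ) =
        -(inner ℝ (g (i + 1)) (x (i + 1) - xstar) : ℝ) := by
      rw [← inner_neg_right]; congr 1; abel
    rw [hflip] at hscT
    have hSi : S i = S (i + 1) - a (i + 1) := by rw [hSrec i]; ring
    have m1 := mul_le_mul_of_nonneg_left hsq
      (div_nonneg (mul_pos hH hSt).le (by norm_num) : (0:ℝ) ≤ H * S (i + 1) / 2)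
    have e6 : H * S (i + 1) / 2 * (c ^ 2 * ‖g (i + 1)‖ ^ 2) = c / 2 := by
      linear_combination (c * ‖g (i + 1)‖ ^ 2 / 2) * hc + (c / 2) * hgsq
    have e7 : H * S (i + 1) / 2 * (2 * c * (inner ℝ (g (i + 1)) (x (i + 1) - xstar) : ℝ))
        = a (i + 1) * (inner ℝ (g (i + 1)) (x (i + 1) - xstar) : ℝ) := by
      linear_combination (inner ℝ (g (i + 1)) (x (i + 1) - xstar) : ℝ) * hc
    have hdivterm : (1 / (2 * H)) * (a (i + 1) / S (i + 1)) = c / 2 := by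
      rw [← hc]
      field_simp [hH.ne', hSt.ne']
    have p1 := mul_le_mul_of_nonneg_left hscT hat.le
    simp only [hb, hD]
    rw [hSi, hdivterm]
    nlinarith [p1, m1, e6, e7]
  -- summed regret bound
  have hbT : 0 ≤ b T := by
    simp only [hb]
    exact mul_nonneg hST.le (by positivity)
  have hsum1 : ∑ t ∈ Finset.Icc 1 T, a t * D t ≤
      (1 / (2 * H)) * ∑ t ∈ Finset.Icc 1 T, a t / S t := by
    rw [hIcc (fun t => a t * D t), hIcc (fun t => a t / S t)]
    have h1 := Finset.sum_le_sum hstep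
    rw [Finset.sum_add_distrib, ← Finset.mul_sum, ← Finset.mul_sum,
      Finset.sum_range_sub' b T] at h1
    have hb0 : b 0 = 0 := by simp [hb, hS0]
    calc ∑ i ∈ Finset.range T, a (i + 1) * D (i + 1) ≤
        H / 2 * (b 0 - b T) + 1 / (2 * H) * ∑ i ∈ Finset.range T, a (i + 1) / S (i + 1) := h1
      _ ≤ 1 / (2 * H) * ∑ i ∈ Finset.range T, a (i + 1) / S (i + 1) := by
          rw [hb0]; nlinarith [hbT, hH]
  -- lower bound on the weighted sum
  have hsumlow : (T : ℝ) / (2 * β) ≤ ∑ t ∈ Finset.Icc 1 T, a t * D t := by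
    calc (T : ℝ) / (2 * β) = ∑ _t ∈ Finset.Icc 1 T, 1 / (2 * β) := by
          rw [Finset.sum_const, Nat.card_Icc]
          simp
          ring
      _ ≤ ∑ t ∈ Finset.Icc 1 T, a t * D t := Finset.sum_le_sum hlow
  -- logarithmic bound on ∑ a/S
  have hL2 : ∑ t ∈ Finset.Icc 1 T, a t / S t ≤ 1 + (Real.log (S T) - Real.log (a 1)) := by
    set φ : ℕ → ℝ := fun t => if t = 0 then Real.log (a 1) - 1 else Real.log (S t) with hφ
    have hstepL : ∀ i ∈ Finset.range T, a (i + 1) / S (i + 1) ≤ φ (i + 1) - φ i := by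
      intro i hi
      cases i with
      | zero =>
        have hS1 : S 1 = a 1 := by simp [hSdef]
        have h01 : a 1 / S 1 = 1 := by rw [hS1]; field_simp [ha1.ne']
        rw [h01]
        simp only [hφ]
        norm_num
        rw [hS1]
        linarith
      | succ k =>
        have hk1 : k + 1 ∈ Finset.Icc 1 T := by
          rw [Finset.mem_range] at hi
          exact Finset.mem_Icc.mpr ⟨Nat.le_add_left 1 k, by omega⟩
        have hk2 := hmemIcc (k + 1) hi
        have hS1 : 0 < S (k + 1) := hSpos _ hk1
        have hS2 : 0 < S (k + 2) := hSpos _ hk2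
        have hrec := hSrec (k + 1)
        have hlog := Real.log_le_sub_one_of_pos (div_pos hS1 hS2)
        rw [Real.log_div (ne_of_gt hS1) (ne_of_gt hS2)] at hlog
        have e : S (k + 1) / S (k + 2) + a (k + 2) / S (k + 2) = 1 := by
          rw [← add_div, ← hrec, div_self (ne_of_gt hS2)]
        simp only [hφ]
        norm_num
        linarith
    calc ∑ t ∈ Finset.Icc 1 T, a t / S t
        = ∑ i ∈ Finset.range T, a (i + 1) / S (i + 1) := hIcc _
      _ ≤ ∑ i ∈ Finset.range T, (φ (i + 1) - φ i) := Finset.sum_le_sum hstepL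
      _ = φ T - φ 0 := Finset.sum_range_sub φ T
      _ = 1 + (Real.log (S T) - Real.log (a 1)) := by
          simp only [hφ]
          rw [if_neg (by omega : ¬ (T = 0))]
          norm_num
          ring
  -- Jensen step
  have hsum_smul : ∑ t ∈ Finset.Icc 1 T, a t • x t = S T • xbar := by
    rw [hxbar, Finset.smul_sum]
    refine Finset.sum_congr rfl fun t ht => ?_
    rw [smul_smul]
    congr 1
    rw [hSbridge]
    simp only [ha]
    field_simp [hST.ne', (pow_pos (hgpos t ht) 2).ne']
  have hsum0 : ∑ t ∈ Finset.Icc 1 T, a t • (x t - xbar) = 0 := by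
    have e1 : ∑ t ∈ Finset.Icc 1 T, a t • (x t - xbar)
        = (∑ t ∈ Finset.Icc 1 T, a t • x t) - (∑ t ∈ Finset.Icc 1 T, a t) • xbar := by
      rw [Finset.sum_smul]
      rw [← Finset.sum_sub_distrib]
      exact Finset.sum_congr rfl fun t _ => smul_sub _ _ _
    have e2 : (∑ t ∈ Finset.Icc 1 T, a t) = S T := by simp [hSdef]
    rw [e1, e2, hsum_smul, sub_self]
  have hjt : ∀ t ∈ Finset.Icc 1 T, a t * f xbar
      + a t * (inner ℝ (gradient f xbar) (x t - xbar) : ℝ) ≤ a t * f (x t) := by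
    intro t ht
    have h := hsc xbar (x t)
    have hnn : 0 ≤ (H / 2) * ‖xbar - x t‖ ^ 2 :=
      mul_nonneg (by linarith) (by positivity)
    have h2 : f xbar + (inner ℝ (gradient f xbar) (x t - xbar) : ℝ) ≤ f (x t) := by linarith
    nlinarith [mul_le_mul_of_nonneg_left h2 (hapos t ht).le]
  have hinner0 : ∑ t ∈ Finset.Icc 1 T, a t * (inner ℝ (gradient f xbar) (x t - xbar) : ℝ) = 0 := by
    have h1 : ∀ t ∈ Finset.Icc 1 T,
        a t * (inner ℝ (gradient f xbar) (x t - xbar) : ℝ)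
          = (inner ℝ (gradient f xbar) (a t • (x t - xbar)) : ℝ) :=
      fun t _ => (real_inner_smul_right _ _ _).symm
    rw [Finset.sum_congr rfl h1, ← inner_sum, hsum0, inner_zero_right]
  have hJ : (f xbar - f xstar) * S T ≤ ∑ t ∈ Finset.Icc 1 T, a t * D t := by
    have h1 := Finset.sum_le_sum hjt
    rw [Finset.sum_add_distrib, hinner0, ← Finset.sum_mul] at h1
    have e : (∑ t ∈ Finset.Icc 1 T, a t) = S T := by simp [hSdef]
    rw [e] at h1
    have e2 : ∑ t ∈ Finset.Icc 1 T, a t * D t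
        = (∑ t ∈ Finset.Icc 1 T, a t * f (x t)) - S T * f xstar := by
      simp only [hD, mul_sub]
      rw [Finset.sum_sub_distrib, ← Finset.sum_mul, e]
    rw [e2]
    linarith
  -- numerics
  set cc : ℝ := H / β * T with hcc
  have hccexp : 3 ≤ Real.exp cc := hexp
  have hlog3 : Real.log 3 ≤ cc := by
    have := Real.log_le_log (by norm_num) hccexp
    rwa [Real.log_exp] at this
  have h1log3 : 1 < Real.log 3 := by
    rw [Real.lt_log_iff_exp_lt (by norm_num)]
    have := Real.exp_one_lt_d9
    linarith
  have hc1 : 1 ≤ cc := le_trans h1log3.le hlog3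
  have hcL : cc ≤ ∑ t ∈ Finset.Icc 1 T, a t / S t := by
    have hch := le_trans hsumlow hsum1
    have h2H : (0:ℝ) < 2 * H := by linarith
    have := mul_le_mul_of_nonneg_left hch h2H.le
    have e1 : 2 * H * ((T : ℝ) / (2 * β)) = cc := by
      rw [hcc]; field_simp
    have e2 : 2 * H * (1 / (2 * H) * ∑ t ∈ Finset.Icc 1 T, a t / S t)
        = ∑ t ∈ Finset.Icc 1 T, a t / S t := by
      field_simp [hH.ne']
    rw [e1, e2] at this
    exact this
  set u : ℝ := S T / a 1 with hu
  have hupos : 0 < u := div_pos hST ha1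
  have hlogu : Real.log u = Real.log (S T) - Real.log (a 1) := by
    rw [hu, Real.log_div (ne_of_gt hST) (ne_of_gt ha1)]
  have hloglb : cc - 1 ≤ Real.log u := by
    rw [hlogu]
    linarith [le_trans hcL hL2]
  have hv1 : 1 ≤ Real.exp (cc - 1) := by
    have h0 : (0:ℝ) ≤ cc - 1 := by linarith
    calc (1:ℝ) = Real.exp 0 := Real.exp_zero.symm
      _ ≤ Real.exp (cc - 1) := Real.exp_le_exp.mpr h0
  have hu1 : Real.exp (cc - 1) ≤ u := by
    calc Real.exp (cc - 1) ≤ Real.exp (Real.log u) := Real.exp_le_exp.mpr hloglb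
      _ = u := Real.exp_log hupos
  have hmono := phi_mono hv1 hu1
  rw [Real.log_exp] at hmono
  -- hmono : exp (cc-1) * (1 + log u) ≤ u * (1 + (cc - 1))
  have hlogu0 : 0 ≤ Real.log u := by linarith
  -- bound on f xbar - f xstar
  have hB : (f xbar - f xstar) * (2 * H * S T) ≤ 1 + Real.log u := by
    have h1 : (f xbar - f xstar) * S T ≤ 1 / (2 * H) * (1 + Real.log u) := by
      calc (f xbar - f xstar) * S T ≤ ∑ t ∈ Finset.Icc 1 T, a t * D t := hJ
        _ ≤ 1 / (2 * H) * ∑ t ∈ Finset.Icc 1 T, a t / S t := hsum1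
        _ ≤ 1 / (2 * H) * (1 + Real.log u) := by
            apply mul_le_mul_of_nonneg_left _ (one_div_nonneg.mpr (by linarith))
            rw [← hlogu] at hL2
            exact hL2
    have h2 := mul_le_mul_of_nonneg_left h1 (show (0:ℝ) ≤ 2 * H by linarith)
    have e : 2 * H * (1 / (2 * H) * (1 + Real.log u)) = 1 + Real.log u := by
      field_simp [hH.ne']
    rw [e] at h2
    linarith [h2]
  -- from hmono : (1 + log u) ≤ u * cc * exp (1 - cc)
  have hC : 1 + Real.log u ≤ u * cc * Real.exp (1 - cc) := by
    have hexps : Real.exp (cc - 1) * Real.exp (1 - cc) = 1 := by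
      rw [← Real.exp_add]; norm_num
    have h3 := mul_le_mul_of_nonneg_right hmono (Real.exp_nonneg (1 - cc))
    calc 1 + Real.log u = Real.exp (cc - 1) * (1 + Real.log u) * Real.exp (1 - cc) := by
          rw [mul_comm (Real.exp (cc - 1)) (1 + Real.log u), mul_assoc, hexps, mul_one]
      _ ≤ u * (1 + (cc - 1)) * Real.exp (1 - cc) := h3
      _ = u * cc * Real.exp (1 - cc) := by ring
  -- G bounds
  have hg1G : ‖g 1‖ ≤ G := by
    rw [hg 1]
    exact hG (x 1) hx1
  have hGpos : 0 < G := lt_of_lt_of_le (norm_pos_iff.mpr hg1ne) hg1G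
  have hGa : 1 ≤ G ^ 2 * a 1 := by
    have h1 : ‖g 1‖ ^ 2 ≤ G ^ 2 := pow_le_pow_left₀ (norm_nonneg _) hg1G 2
    have h2 : ‖g 1‖ ^ 2 * a 1 = 1 := by
      simp only [ha]
      exact mul_inv_cancel₀ (pow_pos (norm_pos_iff.mpr hg1ne) 2).ne'
    nlinarith [ha1]
  -- final computation
  have hSTa : S T = a 1 * u := by
    rw [hu]
    field_simp [ha1.ne']
  have hexp3 : Real.exp (1 - cc) = Real.exp 1 * Real.exp (-cc) := by
    rw [← Real.exp_add]; ring_nf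
  have he3 : Real.exp 1 ≤ 3 := by
    have := Real.exp_one_lt_d9
    linarith
  have hccpos : 0 < cc := lt_of_lt_of_le one_pos hc1
  have hexpcc : 0 < Real.exp (-cc) := Real.exp_pos _
  -- cc * exp(1-cc) ≤ 3 * G^2 * a 1 * (1 + cc) * exp(-cc)
  have hD2 : cc * Real.exp (1 - cc) ≤ 3 * G ^ 2 * a 1 * (1 + cc) * Real.exp (-cc) := by
    rw [hexp3]
    have h1 : cc * Real.exp 1 ≤ 3 * (1 + cc) := by nlinarith
    have h2 : 3 * (1 + cc) ≤ 3 * G ^ 2 * a 1 * (1 + cc) := by nlinarith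
    nlinarith [hexpcc.le, mul_le_mul_of_nonneg_right (le_trans h1 h2) hexpcc.le]
  -- conclude
  have hfinal : f xbar - f xstar ≤ 3 * G ^ 2 / (2 * H) * Real.exp (-cc) * (1 + cc) := by
    have hpos : (0:ℝ) < 2 * H * S T := mul_pos (by linarith) hST
    rw [← mul_le_mul_iff_of_pos_right hpos]
    calc (f xbar - f xstar) * (2 * H * S T) ≤ 1 + Real.log u := hB
      _ ≤ u * cc * Real.exp (1 - cc) := hC
      _ ≤ u * (3 * G ^ 2 * a 1 * (1 + cc) * Real.exp (-cc)) := by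
          have := mul_le_mul_of_nonneg_left hD2 hupos.le
          calc u * cc * Real.exp (1 - cc) = u * (cc * Real.exp (1 - cc)) := by ring
            _ ≤ u * (3 * G ^ 2 * a 1 * (1 + cc) * Real.exp (-cc)) := this
      _ = 3 * G ^ 2 / (2 * H) * Real.exp (-cc) * (1 + cc) * (2 * H * S T) := by
          rw [hSTa]
          field_simp [hH.ne']
  have hxsf : f xstar ≤ f xs := hmin xs
  have hgoal : (3 * G ^ 2 / (2 * H)) * Real.exp (-(H / β) * (T:ℝ)) * (1 + (H / β) * (T:ℝ))
      = 3 * G ^ 2 / (2 * H) * Real.exp (-cc) * (1 + cc) := by rw [hcc]; ring_nf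
  rw [hgoal]
  linarith
end

section
/- (SC-AdaGrad regret bound.) Let f_1, …, f_T : ℝ^d → ℝ be differentiable, where each f_t is H_t-strongly convex with H_t > 0. Let x_1 ∈ K, and for t = 1, …, T set g_t := ∇f_t(x_t), η_t := 1 / (Σ_{τ=1}^t H_τ), and x_{t+1} := Π_K(x_t − η_t g_t). Then for every x ∈ K: Σ_{t=1}^T f_t(x_t) − Σ_{t=1}^T f_t(x) ≤ (1/2) Σ_{t=1}^T η_t ‖g_t‖². -/
set_option maxHeartbeats 1000000

theorem sc_adagrad_regret
    {d : ℕ} (T : ℕ) (hT : 1 ≤ T)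
    (K : Set (EuclideanSpace ℝ (Fin d)))
    (hKne : K.Nonempty) (hKcl : IsClosed K) (hKbdd : Bornology.IsBounded K)
    (hKconv : Convex ℝ K)
    (proj : EuclideanSpace ℝ (Fin d) → EuclideanSpace ℝ (Fin d))
    (hproj_mem : ∀ y, proj y ∈ K)
    (hproj_min : ∀ y, ∀ z ∈ K, ‖proj y - y‖ ≤ ‖z - y‖)
    (f : ℕ → EuclideanSpace ℝ (Fin d) → ℝ) (H : ℕ → ℝ)
    (hH : ∀ t, 0 < H t)
    (hdiff : ∀ t, Differentiable ℝ (f t))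
    (hsc : ∀ t x y, f t x + (inner ℝ (gradient (f t) x) (y - x) : ℝ) + (H t / 2) * ‖x - y‖ ^ 2 ≤ f t y)
    (x : ℕ → EuclideanSpace ℝ (Fin d)) (g : ℕ → EuclideanSpace ℝ (Fin d)) (η : ℕ → ℝ)
    (hx1 : x 1 ∈ K)
    (hg : ∀ t, g t = gradient (f t) (x t))
    (hη : ∀ t, η t = 1 / ∑ τ ∈ Finset.Icc 1 t, H τ)
    (hupd : ∀ t ∈ Finset.Icc 1 T, x (t + 1) = proj (x t - η t • g t)) :
    ∀ xs ∈ K,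
      ∑ t ∈ Finset.Icc 1 T, f t (x t) - ∑ t ∈ Finset.Icc 1 T, f t xs ≤
        (1 / 2) * ∑ t ∈ Finset.Icc 1 T, η t * ‖g t‖ ^ 2 := by
  intro xs hxs
  -- firm projection property
  have hfirm : ∀ y, ∀ z ∈ K, ‖proj y - z‖ ^ 2 ≤ ‖y - z‖ ^ 2 := by
    intro y z hz
    have hnorm : ‖y - proj y‖ = ⨅ w : K, ‖y - w‖ := by
      have hne : Nonempty K := ⟨⟨proj y, hproj_mem y⟩⟩
      apply le_antisymm
      · apply le_ciInf
        intro w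
        rw [norm_sub_rev y, norm_sub_rev y]
        exact hproj_min y w w.2
      · have hbdd : BddBelow (Set.range fun w : K => ‖y - (w : EuclideanSpace ℝ (Fin d))‖) := by
          refine ⟨0, ?_⟩
          rintro _ ⟨w, rfl⟩
          exact norm_nonneg _
        exact ciInf_le hbdd ⟨proj y, hproj_mem y⟩
    have hvar : ∀ w ∈ K, (inner ℝ (y - proj y) (w - proj y) : ℝ) ≤ 0 :=
      (norm_eq_iInf_iff_real_inner_le_zero hKconv (hproj_mem y)).mp hnorm
    have hz' := hvar z hz
    have hexp : ‖y - z‖ ^ 2 =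
        ‖y - proj y‖ ^ 2 + 2 * (inner ℝ (y - proj y) (proj y - z) : ℝ) + ‖proj y - z‖ ^ 2 := by
      have : y - z = (y - proj y) + (proj y - z) := by abel
      rw [this, norm_add_sq_real]
    have hip : (inner ℝ (y - proj y) (proj y - z) : ℝ) = -(inner ℝ (y - proj y) (z - proj y) : ℝ) := by
      rw [← inner_neg_right, neg_sub]
    nlinarith [sq_nonneg ‖y - proj y‖]
  -- abbreviations
  set S : ℕ → ℝ := fun t => ∑ τ ∈ Finset.Icc 1 t, H τ with hS
  set D : ℕ → ℝ := fun t => ‖x t - xs‖ ^ 2 with hD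
  have hS0 : S 0 = 0 := by simp [hS]
  have hSsucc : ∀ k, S (k + 1) = S k + H (k + 1) := by
    intro k
    simp only [hS]
    rw [Finset.sum_Icc_succ_top (by omega : 1 ≤ k + 1)]
  have hSpos : ∀ t, 1 ≤ t → 0 < S t := by
    intro t ht
    apply Finset.sum_pos (fun i _ => hH i)
    exact ⟨1, Finset.mem_Icc.mpr ⟨le_refl 1, ht⟩⟩
  have hmem : ∀ t, 1 ≤ t → t ≤ T + 1 → x t ∈ K := by
    intro t
    induction t with
    | zero => omega
    | succ n ih =>
      intro _ h2
      rcases Nat.eq_zero_or_pos n with h0 | hpos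
      · subst h0; exact hx1
      · rw [hupd n (Finset.mem_Icc.mpr ⟨hpos, by omega⟩)]
        exact hproj_mem _
  -- per-step inequality
  have hstep : ∀ t ∈ Finset.Icc 1 T, f t (x t) - f t xs ≤
      (1 / 2) * (S (t - 1) * D t - S t * D (t + 1)) + (1 / 2) * (η t * ‖g t‖ ^ 2) := by
    intro t htmem
    obtain ⟨ht1, htT⟩ := Finset.mem_Icc.mp htmem
    have hSt : 0 < S t := hSpos t ht1
    have hηt : η t = 1 / S t := hη t
    have hηpos : 0 < η t := by rw [hηt]; positivity
    set A : ℝ := inner ℝ (g t) (x t - xs) with hA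
    -- strong convexity
    have hsc' := hsc t (x t) xs
    have hinner : (inner ℝ (gradient (f t) (x t)) (xs - x t) : ℝ) = -A := by
      rw [hA, ← hg, ← inner_neg_right, neg_sub]
    rw [hinner] at hsc'
    -- projection step
    have hx1t : x (t + 1) = proj (x t - η t • g t) := hupd t htmem
    have hproj_ineq : D (t + 1) ≤ ‖(x t - η t • g t) - xs‖ ^ 2 := by
      rw [hD]
      simp only
      rw [hx1t]
      exact hfirm _ xs hxs
    have hexpand : ‖(x t - η t • g t) - xs‖ ^ 2
        = D t - 2 * η t * A + η t ^ 2 * ‖g t‖ ^ 2 := by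
      have h1 : (x t - η t • g t) - xs = (x t - xs) - η t • g t := by abel
      rw [h1, norm_sub_sq_real, real_inner_smul_right, norm_smul]
      have : (inner ℝ (x t - xs) (g t) : ℝ) = A := real_inner_comm _ _
      rw [this]
      simp [abs_of_pos hηpos]
      ring
    rw [hexpand] at hproj_ineq
    -- combine
    have hAle : A ≤ S t / 2 * (D t - D (t + 1)) + η t / 2 * ‖g t‖ ^ 2 := by
      have hηS : η t * S t = 1 := by rw [hηt]; field_simp
      have key : S t * D (t + 1) ≤ S t * D t - 2 * A + η t * ‖g t‖ ^ 2 := by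
        calc S t * D (t + 1) ≤ S t * (D t - 2 * η t * A + η t ^ 2 * ‖g t‖ ^ 2) :=
              mul_le_mul_of_nonneg_left hproj_ineq hSt.le
          _ = S t * D t - 2 * (η t * S t) * A + (η t * S t) * (η t * ‖g t‖ ^ 2) := by ring
          _ = S t * D t - 2 * A + η t * ‖g t‖ ^ 2 := by rw [hηS]; ring
      have h2 := mul_pos hηpos hSt
      nlinarith [key, hηS]
    have hSsub : S (t - 1) = S t - H t := by
      obtain ⟨k, rfl⟩ := Nat.exists_eq_add_of_le ht1
      have : 1 + k = k + 1 := by omega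
      rw [this, hSsucc k]
      simp
    have hDt_nonneg : (0:ℝ) ≤ D t := by rw [hD]; positivity
    have hDt : ‖x t - xs‖ ^ 2 = D t := rfl
    rw [hDt] at hsc'
    rw [hSsub]
    nlinarith [hsc', hAle]
  calc ∑ t ∈ Finset.Icc 1 T, f t (x t) - ∑ t ∈ Finset.Icc 1 T, f t xs
      = ∑ t ∈ Finset.Icc 1 T, (f t (x t) - f t xs) := (Finset.sum_sub_distrib _ _).symm
    _ ≤ ∑ t ∈ Finset.Icc 1 T, ((1 / 2) * (S (t - 1) * D t - S t * D (t + 1))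
          + (1 / 2) * (η t * ‖g t‖ ^ 2)) := Finset.sum_le_sum hstep
    _ = (1 / 2) * (∑ t ∈ Finset.Icc 1 T, (S (t - 1) * D t - S t * D (t + 1)))
          + (1 / 2) * ∑ t ∈ Finset.Icc 1 T, η t * ‖g t‖ ^ 2 := by
        rw [Finset.sum_add_distrib, ← Finset.mul_sum, ← Finset.mul_sum]
    _ ≤ (1 / 2) * ∑ t ∈ Finset.Icc 1 T, η t * ‖g t‖ ^ 2 := by
        have tele : ∀ n : ℕ, ∑ t ∈ Finset.Icc 1 n, (S (t - 1) * D t - S t * D (t + 1))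
            = -(S n * D (n + 1)) := by
          intro n
          induction n with
          | zero => simp [hS0]
          | succ n ih =>
            rw [Finset.sum_Icc_succ_top (by omega : 1 ≤ n + 1), ih]
            simp only [Nat.add_sub_cancel]
            ring
        rw [tele T]
        have h1 : 0 < S T := hSpos T hT
        have h2 : (0:ℝ) ≤ D (T + 1) := by rw [hD]; positivity
        nlinarith
end

section
/- (Logarithmic sum inequality.) For any real numbers a_1, …, a_n with a_i ≥ 1 for all i: Σ_{i=1}^n a_i / (Σ_{j=1}^i a_j) ≤ 1 + log(Σ_{i=1}^n a_i). -/
theorem log_sum_inequality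
    (n : ℕ) (a : ℕ → ℝ) (ha : ∀ i ∈ Finset.Icc 1 n, 1 ≤ a i) :
    ∑ i ∈ Finset.Icc 1 n, a i / (∑ j ∈ Finset.Icc 1 i, a j) ≤
      1 + Real.log (∑ i ∈ Finset.Icc 1 n, a i) := by
  induction n with
  | zero => simp
  | succ n ih =>
    have ha' : ∀ i ∈ Finset.Icc 1 n, 1 ≤ a i := fun i hi => by
      refine ha i ?_
      simp only [Finset.mem_Icc] at hi ⊢
      omega
    have hsplit : ∀ f : ℕ → ℝ, ∑ i ∈ Finset.Icc 1 (n+1), f i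
        = (∑ i ∈ Finset.Icc 1 n, f i) + f (n+1) := fun f =>
      Finset.sum_Icc_succ_top (by omega) f
    rcases Nat.eq_zero_or_pos n with hn | hn
    · subst hn
      have h1 : (1:ℝ) ≤ a 1 := ha 1 (by simp)
      have ha1 : a 1 ≠ 0 := by linarith
      have e : Finset.Icc 1 0 = (∅ : Finset ℕ) := by simp
      simp only [hsplit, e, Finset.sum_empty, zero_add]
      rw [div_self ha1]
      have := Real.log_nonneg h1
      linarith
    · have hS : (1:ℝ) ≤ ∑ i ∈ Finset.Icc 1 n, a i := by
        calc (1:ℝ) ≤ a 1 := ha' 1 (Finset.mem_Icc.mpr ⟨le_refl 1, hn⟩)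
        _ ≤ ∑ i ∈ Finset.Icc 1 n, a i := by
          refine Finset.single_le_sum (fun i hi => ?_) (Finset.mem_Icc.mpr ⟨le_refl 1, hn⟩)
          have := ha' i hi; linarith
      set S := ∑ i ∈ Finset.Icc 1 n, a i with hSdef
      have han : (1:ℝ) ≤ a (n+1) := ha (n+1) (by simp)
      have hSpos : (0:ℝ) < S := by linarith
      have hTpos : (0:ℝ) < S + a (n+1) := by linarith
      have hkey : a (n+1) / (S + a (n+1)) ≤ Real.log (S + a (n+1)) - Real.log S := by
        have hl := Real.log_le_sub_one_of_pos (div_pos hSpos hTpos)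
        rw [Real.log_div (ne_of_gt hSpos) (ne_of_gt hTpos)] at hl
        have : a (n+1) / (S + a (n+1)) = 1 - S / (S + a (n+1)) := by
          field_simp
          ring
        rw [this]
        linarith
      rw [hsplit, hsplit, ← hSdef]
      linarith [ih ha']
end

section
/- (Gradient-norm sum bound along AdaNGD_1 iterates, smooth case.) Let f : ℝ^d → ℝ be convex, differentiable and β-smooth, and suppose the global minimizer x* := argmin_{x ∈ ℝ^d} f(x) belongs to K. Let x_1, …, x_T be the AdaNGD_k iterates with k = 1, with g_t := ∇f(x_t) ≠ 0 for all t = 1, …, T. Then Σ_{t=1}^T ‖g_t‖ ≤ 2√2 · β D √T. -/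
lemma aux_sum_inv_sqrt (n : ℕ) : ∑ t ∈ Finset.Icc 1 n, 1 / Real.sqrt t ≤ 2 * Real.sqrt n := by
  induction n with
  | zero => simp
  | succ n ih =>
    rw [Finset.sum_Icc_succ_top (by omega)]
    have hs : Real.sqrt n ≥ 0 := Real.sqrt_nonneg _
    have ht : Real.sqrt (n+1 : ℕ) > 0 := Real.sqrt_pos.mpr (by positivity)
    have hsq : (Real.sqrt n)^2 = n := Real.sq_sqrt (by positivity)
    have htq : (Real.sqrt (n+1:ℕ))^2 = (n:ℝ)+1 := by
      rw [Real.sq_sqrt (by positivity)]; push_cast; ring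
    have key : 1 / Real.sqrt (n+1:ℕ) ≤ 2 * Real.sqrt (n+1:ℕ) - 2 * Real.sqrt n := by
      rw [div_le_iff₀ ht]
      nlinarith [sq_nonneg (Real.sqrt (n+1:ℕ) - Real.sqrt n)]
    linarith

lemma aux_proj_nonexp {d : ℕ} {K : Set (EuclideanSpace ℝ (Fin d))} (hKne : K.Nonempty)
    (hKconv : Convex ℝ K)
    (proj : EuclideanSpace ℝ (Fin d) → EuclideanSpace ℝ (Fin d))
    (hproj_mem : ∀ y, proj y ∈ K)
    (hproj_min : ∀ y, ∀ z ∈ K, ‖proj y - y‖ ≤ ‖z - y‖)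
    (y z : EuclideanSpace ℝ (Fin d)) (hz : z ∈ K) : ‖proj y - z‖ ≤ ‖y - z‖ := by
  have hinf : ‖y - proj y‖ = ⨅ w : K, ‖y - (w : EuclideanSpace ℝ (Fin d))‖ := by
    haveI : Nonempty K := hKne.to_subtype
    apply le_antisymm
    · apply le_ciInf
      intro w
      rw [norm_sub_rev]
      rw [norm_sub_rev y]
      exact hproj_min y w w.2
    · exact ciInf_le ⟨0, by rintro _ ⟨w, rfl⟩; exact norm_nonneg _⟩ (⟨proj y, hproj_mem y⟩ : K)
  have hvar := (norm_eq_iInf_iff_real_inner_le_zero hKconv (hproj_mem y)).mp hinf z hz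
  have hexp : ‖y - z‖^2 = ‖y - proj y‖^2 + 2 * inner ℝ (y - proj y) (proj y - z) + ‖proj y - z‖^2 := by
    have h : y - z = (y - proj y) + (proj y - z) := by abel
    rw [h, norm_add_sq_real]
  have hip : (0:ℝ) ≤ inner ℝ (y - proj y) (proj y - z) := by
    have h : (proj y - z) = -(z - proj y) := by abel
    rw [h, inner_neg_right]
    linarith
  have h2 : ‖proj y - z‖^2 ≤ ‖y - z‖^2 := by nlinarith [norm_nonneg (y - proj y), sq_nonneg ‖y - proj y‖]
  calc ‖proj y - z‖ = Real.sqrt (‖proj y - z‖^2) := (Real.sqrt_sq (norm_nonneg _)).symm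
    _ ≤ Real.sqrt (‖y - z‖^2) := Real.sqrt_le_sqrt h2
    _ = ‖y - z‖ := Real.sqrt_sq (norm_nonneg _)

theorem adangd_one_grad_sum_bound
    {d : ℕ} (T : ℕ) (hT : 1 ≤ T) (β : ℝ)
    (K : Set (EuclideanSpace ℝ (Fin d)))
    (hKne : K.Nonempty) (hKcl : IsClosed K) (hKbdd : Bornology.IsBounded K)
    (hKconv : Convex ℝ K)
    (proj : EuclideanSpace ℝ (Fin d) → EuclideanSpace ℝ (Fin d))
    (hproj_mem : ∀ y, proj y ∈ K)
    (hproj_min : ∀ y, ∀ z ∈ K, ‖proj y - y‖ ≤ ‖z - y‖)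
    (D : ℝ) (hD : D = Metric.diam K)
    (f : EuclideanSpace ℝ (Fin d) → ℝ)
    (hdiff : Differentiable ℝ f)
    (hconv : ∀ x y, f x + (inner ℝ (gradient f x) (y - x) : ℝ) ≤ f y)
    (hsmooth : ∀ x y, f y ≤ f x + (inner ℝ (gradient f x) (y - x) : ℝ) + (β / 2) * ‖x - y‖ ^ 2)
    (xstar : EuclideanSpace ℝ (Fin d)) (hxstarK : xstar ∈ K)
    (hmin : ∀ y, f xstar ≤ f y)
    (x : ℕ → EuclideanSpace ℝ (Fin d)) (g : ℕ → EuclideanSpace ℝ (Fin d)) (η : ℕ → ℝ)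
    (hx1 : x 1 ∈ K)
    (hg : ∀ t, g t = gradient f (x t))
    (hgne : ∀ t ∈ Finset.Icc 1 T, g t ≠ 0)
    (hη : ∀ t, η t = D / Real.sqrt (2 * t))
    (hupd : ∀ t ∈ Finset.Icc 1 T, x (t + 1) = proj (x t - (η t / ‖g t‖) • g t))
    :
    ∑ t ∈ Finset.Icc 1 T, ‖g t‖ ≤ 2 * Real.sqrt 2 * β * D * Real.sqrt T := by
  have h1T : (1:ℕ) ∈ Finset.Icc 1 T := Finset.mem_Icc.mpr ⟨le_refl 1, hT⟩
  -- gradient vanishes at a global minimizer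
  have min_grad_zero : ∀ p : EuclideanSpace ℝ (Fin d), (∀ y, f p ≤ f y) → gradient f p = 0 := by
    intro p hp
    have hloc : IsLocalMin f p := by
      apply IsMinOn.isLocalMin (s := Set.univ)
      · intro y _; exact hp y
      · exact Filter.univ_mem
    have hfd : fderiv ℝ f p = 0 := hloc.fderiv_eq_zero
    rw [gradient, hfd, map_zero]
  have hDnn : 0 ≤ D := hD ▸ Metric.diam_nonneg
  have hDpos : 0 < D := by
    rcases hDnn.lt_or_eq with h | h
    · exact h
    · exfalso
      have hdist : dist (x 1) xstar ≤ Metric.diam K :=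
        Metric.dist_le_diam_of_mem hKbdd hx1 hxstarK
      rw [← hD, ← h] at hdist
      have hxx : x 1 = xstar := by
        have := dist_nonneg (x := x 1) (y := xstar)
        have : dist (x 1) xstar = 0 := le_antisymm hdist this
        exact dist_eq_zero.mp this
      apply hgne 1 h1T
      rw [hg 1, hxx]
      exact min_grad_zero xstar hmin
  have hβpos : 0 < β := by
    by_contra hb
    push_neg at hb
    have hgs : gradient f xstar = 0 := min_grad_zero xstar hmin
    have hmin1 : ∀ y, f (x 1) ≤ f y := by
      intro y
      have h1 := hsmooth xstar (x 1)
      rw [hgs] at h1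
      simp only [inner_zero_left] at h1
      have h2 : (β / 2) * ‖xstar - x 1‖ ^ 2 ≤ 0 := by
        apply mul_nonpos_of_nonpos_of_nonneg
        · linarith
        · positivity
      have : f (x 1) ≤ f xstar := by linarith
      exact this.trans (hmin y)
    apply hgne 1 h1T
    rw [hg 1]
    exact min_grad_zero (x 1) hmin1
  -- iterates stay in K
  have hxK : ∀ t, 1 ≤ t → t ≤ T + 1 → x t ∈ K := by
    intro t
    induction t with
    | zero => omega
    | succ s _ =>
      intro h1 h2
      rcases Nat.eq_zero_or_pos s with hs | hs
      · subst hs; exact hx1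
      · rw [hupd s (Finset.mem_Icc.mpr ⟨hs, by omega⟩)]
        exact hproj_mem _
  set a : ℕ → ℝ := fun t => ‖x t - xstar‖ ^ 2 with ha_def
  set b : ℕ → ℝ := fun t => Real.sqrt (2 * (t:ℝ)) / D with hb_def
  have hann : ∀ t, 0 ≤ a t := fun t => sq_nonneg _
  have haD : ∀ t, 1 ≤ t → t ≤ T + 1 → a t ≤ D ^ 2 := by
    intro t h1 h2
    have hdist : dist (x t) xstar ≤ D := hD ▸ Metric.dist_le_diam_of_mem hKbdd (hxK t h1 h2) hxstarK
    rw [dist_eq_norm] at hdist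
    simp only [ha_def]
    exact pow_le_pow_left₀ (norm_nonneg _) hdist 2
  have hbnn : ∀ t, 0 ≤ b t := by
    intro t; simp only [hb_def]; positivity
  have hbmono : ∀ t : ℕ, b t ≤ b (t + 1) := by
    intro t; simp only [hb_def]
    gcongr
    push_cast; linarith
  have hsqrt_pos : ∀ t : ℕ, 1 ≤ t → 0 < Real.sqrt (2 * (t:ℝ)) := by
    intro t h1
    apply Real.sqrt_pos.mpr
    have : (1:ℝ) ≤ (t:ℝ) := by exact_mod_cast h1
    linarith
  have hηpos : ∀ t : ℕ, 1 ≤ t → 0 < η t := by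
    intro t h1
    rw [hη t]
    exact div_pos hDpos (hsqrt_pos t h1)
  have hbη : ∀ t : ℕ, 1 ≤ t → b t * η t = 1 := by
    intro t h1
    rw [hη t]
    simp only [hb_def]
    field_simp
  -- key per-step inequality
  have key : ∀ t ∈ Finset.Icc 1 T, ‖g t‖ ≤ β * ((a t - a (t + 1)) * b t + η t) := by
    intro t htmem
    obtain ⟨ht1, htT⟩ := Finset.mem_Icc.mp htmem
    have hgt : g t ≠ 0 := hgne t htmem
    have hgn : 0 < ‖g t‖ := norm_pos_iff.mpr hgt
    -- Step A: ‖g t‖² ≤ 2β(f(x t) - f*)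
    have hA : ‖g t‖ ^ 2 ≤ 2 * β * (f (x t) - f xstar) := by
      have hy := hsmooth (x t) (x t - β⁻¹ • g t)
      rw [← hg t] at hy
      have e1 : x t - β⁻¹ • g t - x t = -(β⁻¹ • g t) := by abel
      have e2 : x t - (x t - β⁻¹ • g t) = β⁻¹ • g t := by abel
      rw [e1, e2, inner_neg_right, real_inner_smul_right, real_inner_self_eq_norm_sq,
        norm_smul] at hy
      have habs : ‖(β⁻¹:ℝ)‖ = β⁻¹ := by
        rw [Real.norm_eq_abs, abs_of_pos (by positivity)]
      rw [habs] at hy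
      have hsq : (β / 2) * (β⁻¹ * ‖g t‖) ^ 2 = β⁻¹ * ‖g t‖ ^ 2 / 2 := by
        field_simp
      rw [hsq] at hy
      have hmy := hmin (x t - β⁻¹ • g t)
      have hinv : β⁻¹ * ‖g t‖ ^ 2 ≤ 2 * (f (x t) - f xstar) := by linarith
      calc ‖g t‖ ^ 2 = β * (β⁻¹ * ‖g t‖ ^ 2) := by field_simp
        _ ≤ β * (2 * (f (x t) - f xstar)) := mul_le_mul_of_nonneg_left hinv hβpos.le
        _ = 2 * β * (f (x t) - f xstar) := by ring
    -- Step B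
    have hB : f (x t) - f xstar ≤ (inner ℝ (g t) (x t - xstar) : ℝ) := by
      have hc := hconv (x t) xstar
      rw [← hg t] at hc
      have e : xstar - x t = -(x t - xstar) := by abel
      rw [e, inner_neg_right] at hc
      linarith
    have hI : ‖g t‖ ^ 2 ≤ 2 * β * (inner ℝ (g t) (x t - xstar) : ℝ) := by
      refine hA.trans ?_
      exact mul_le_mul_of_nonneg_left hB (by positivity)
    -- Step C
    set c := η t / ‖g t‖ with hc_def
    have hcg : c * ‖g t‖ = η t := div_mul_cancel₀ _ (ne_of_gt hgn)
    have hcpos : 0 < c := div_pos (hηpos t ht1) hgn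
    have hne : a (t + 1) ≤ ‖(x t - c • g t) - xstar‖ ^ 2 := by
      have hw : x (t + 1) = proj (x t - c • g t) := hupd t htmem
      simp only [ha_def]
      rw [hw]
      exact pow_le_pow_left₀ (norm_nonneg _)
        (aux_proj_nonexp hKne hKconv proj hproj_mem hproj_min _ _ hxstarK) 2
    have hexp : ‖(x t - c • g t) - xstar‖ ^ 2
        = a t - 2 * (c * (inner ℝ (g t) (x t - xstar) : ℝ)) + (η t) ^ 2 := by
      have e : (x t - c • g t) - xstar = (x t - xstar) - c • g t := by abel
      rw [e, norm_sub_sq_real, real_inner_smul_right, norm_smul]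
      have h1 : (‖c‖ * ‖g t‖) ^ 2 = η t ^ 2 := by
        rw [Real.norm_eq_abs, mul_pow, sq_abs, ← mul_pow, hcg]
      rw [h1, real_inner_comm]
    have step1 : 2 * (c * (inner ℝ (g t) (x t - xstar) : ℝ)) ≤ a t - a (t + 1) + η t ^ 2 := by
      rw [hexp] at hne; linarith
    have step3 : η t * ‖g t‖ ≤ β * (a t - a (t + 1) + η t ^ 2) := by
      have m1 : c * ‖g t‖ ^ 2 ≤ c * (2 * β * (inner ℝ (g t) (x t - xstar) : ℝ)) :=
        mul_le_mul_of_nonneg_left hI hcpos.le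
      have m2 : β * (2 * (c * (inner ℝ (g t) (x t - xstar) : ℝ)))
          ≤ β * (a t - a (t + 1) + η t ^ 2) := mul_le_mul_of_nonneg_left step1 hβpos.le
      have e1 : c * (2 * β * (inner ℝ (g t) (x t - xstar) : ℝ))
          = β * (2 * (c * (inner ℝ (g t) (x t - xstar) : ℝ))) := by ring
      have e2 : η t * ‖g t‖ = c * ‖g t‖ ^ 2 := by rw [← hcg]; ring
      linarith
    have hbt := hbη t ht1
    have step4 := mul_le_mul_of_nonneg_left step3 (hbnn t)
    calc ‖g t‖ = b t * (η t * ‖g t‖) := by rw [← mul_assoc, hbt, one_mul]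
      _ ≤ b t * (β * (a t - a (t + 1) + η t ^ 2)) := step4
      _ = β * ((a t - a (t + 1)) * b t + η t ^ 2 * b t) := by ring
      _ = β * ((a t - a (t + 1)) * b t + η t) := by
          have h : η t ^ 2 * b t = η t * (b t * η t) := by ring
          rw [h, hbt, mul_one]
  -- summed bound
  have sum1 : ∑ t ∈ Finset.Icc 1 T, ‖g t‖
      ≤ β * (∑ t ∈ Finset.Icc 1 T, (a t - a (t + 1)) * b t)
        + β * (∑ t ∈ Finset.Icc 1 T, η t) := by
    calc ∑ t ∈ Finset.Icc 1 T, ‖g t‖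
        ≤ ∑ t ∈ Finset.Icc 1 T, β * ((a t - a (t + 1)) * b t + η t) :=
          Finset.sum_le_sum key
      _ = _ := by rw [← mul_add, ← Finset.sum_add_distrib]; rw [Finset.mul_sum]
  -- Abel-type telescoping bound
  have claim1 : ∀ n, 1 ≤ n → n ≤ T →
      ∑ t ∈ Finset.Icc 1 n, (a t - a (t + 1)) * b t ≤ D ^ 2 * b n - a (n + 1) * b n := by
    intro n hn1
    induction n, hn1 using Nat.le_induction with
    | base =>
      intro _
      rw [Finset.Icc_self, Finset.sum_singleton]
      nlinarith [haD 1 le_rfl (by omega), hbnn 1, hann 2]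
    | succ n hn ih =>
      intro hT'
      rw [Finset.sum_Icc_succ_top (by omega)]
      have ihh := ih (by omega)
      have h1 : a (n + 1) ≤ D ^ 2 := haD (n + 1) (by omega) (by omega)
      have h2 : b n ≤ b (n + 1) := hbmono n
      have h3 := hann (n + 2)
      have h4 := hbnn (n + 1)
      nlinarith [mul_nonneg (sub_nonneg.mpr h1) (sub_nonneg.mpr h2)]
  have habel : ∑ t ∈ Finset.Icc 1 T, (a t - a (t + 1)) * b t ≤ D ^ 2 * b T := by
    have := claim1 T hT le_rfl
    nlinarith [mul_nonneg (hann (T + 1)) (hbnn T)]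
  -- step size sum
  have sum2 : ∑ t ∈ Finset.Icc 1 T, η t ≤ D * Real.sqrt (2 * (T:ℝ)) := by
    have hsqrt2 : (0:ℝ) < Real.sqrt 2 := Real.sqrt_pos.mpr (by norm_num)
    have heq : ∀ t ∈ Finset.Icc 1 T, η t = (D / Real.sqrt 2) * (1 / Real.sqrt t) := by
      intro t htmem
      obtain ⟨ht1, _⟩ := Finset.mem_Icc.mp htmem
      have hst : (0:ℝ) < Real.sqrt t := Real.sqrt_pos.mpr (by
        have : (1:ℝ) ≤ (t:ℝ) := by exact_mod_cast ht1
        linarith)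
      rw [hη t, Real.sqrt_mul (by norm_num : (0:ℝ) ≤ 2)]
      field_simp
    rw [Finset.sum_congr rfl heq, ← Finset.mul_sum]
    have hle := aux_sum_inv_sqrt T
    have hmul := mul_le_mul_of_nonneg_left hle (le_of_lt (div_pos hDpos hsqrt2))
    refine hmul.trans (le_of_eq ?_)
    rw [Real.sqrt_mul (by norm_num : (0:ℝ) ≤ 2)]
    rw [div_mul_eq_mul_div, div_eq_iff (ne_of_gt hsqrt2)]
    have h2 : Real.sqrt 2 * Real.sqrt 2 = 2 := Real.mul_self_sqrt (by norm_num)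
    linear_combination (-1 : ℝ) * D * Real.sqrt (T:ℝ) * h2
  have hbT : D ^ 2 * b T = D * Real.sqrt (2 * (T:ℝ)) := by
    simp only [hb_def]
    field_simp
  have hfinal : 2 * Real.sqrt 2 * β * D * Real.sqrt T = 2 * (β * (D * Real.sqrt (2 * (T:ℝ)))) := by
    rw [Real.sqrt_mul (by norm_num : (0:ℝ) ≤ 2)]
    ring
  rw [hfinal]
  have m1 : β * (∑ t ∈ Finset.Icc 1 T, (a t - a (t + 1)) * b t) ≤ β * (D * Real.sqrt (2 * (T:ℝ))) := by
    rw [← hbT]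
    exact mul_le_mul_of_nonneg_left habel hβpos.le
  have m2 : β * (∑ t ∈ Finset.Icc 1 T, η t) ≤ β * (D * Real.sqrt (2 * (T:ℝ))) :=
    mul_le_mul_of_nonneg_left sum2 hβpos.le
  linarith
end

section
/- (Inverse-squared-gradient sum bound along AdaNGD_2 iterates, smooth case.) Let f : ℝ^d → ℝ be convex, differentiable and β-smooth, and suppose the global minimizer x* := argmin_{x ∈ ℝ^d} f(x) belongs to K. Let x_1, …, x_T be the AdaNGD_k iterates with k = 2, with g_t := ∇f(x_t) ≠ 0 for all t = 1, …, T. Then T ≤ 2√2 · β D · √(Σ_{t=1}^T 1/‖g_t‖²). -/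
open Finset in
lemma tele_bound (T : ℕ) (b c : ℕ → ℝ) (M : ℝ)
    (hb : ∀ t, 1 ≤ t → t ≤ T + 1 → 0 ≤ b t ∧ b t ≤ M)
    (hc : ∀ t, 1 ≤ t → 0 ≤ c t)
    (hmono : ∀ t, 1 ≤ t → t < T → c t ≤ c (t + 1)) :
    ∀ n, 1 ≤ n → n ≤ T →
      ∑ t ∈ Finset.Icc 1 n, (b t - b (t + 1)) * c t ≤ M * c n - b (n + 1) * c n := by
  intro n hn
  induction n, hn using Nat.le_induction with
  | base =>
    intro h1T
    rw [show Finset.Icc 1 1 = {1} from rfl, Finset.sum_singleton]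
    have h1 := hb 1 le_rfl (by omega)
    have h2 := hb 2 (by omega) (by omega)
    have := hc 1 le_rfl
    nlinarith [h1.1, h1.2, h2.1]
  | succ n hn ih =>
    intro hnT
    rw [Finset.sum_Icc_succ_top (by omega : 1 ≤ n + 1)]
    have ih' := ih (by omega)
    have hb1 := hb (n + 1) (by omega) (by omega)
    have hb2 := hb (n + 2) (by omega) (by omega)
    have hm := hmono n hn (by omega)
    have hc1 := hc (n + 1) (by omega)
    nlinarith [hb1.1, hb1.2, hb2.1]

open Finset in
lemma sqrt_sum_bound (a : ℕ → ℝ) (ha : ∀ t, 1 ≤ t → 0 ≤ a t) (ha1 : 0 < a 1) :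
    ∀ n, 1 ≤ n →
      ∑ t ∈ Finset.Icc 1 n, a t / Real.sqrt (∑ τ ∈ Finset.Icc 1 t, a τ) ≤
        2 * Real.sqrt (∑ τ ∈ Finset.Icc 1 n, a τ) := by
  have hS : ∀ n, 1 ≤ n → 0 < ∑ τ ∈ Finset.Icc 1 n, a τ := by
    intro n hn
    have h1 : a 1 ≤ ∑ τ ∈ Finset.Icc 1 n, a τ :=
      Finset.single_le_sum (fun τ hτ => ha τ (Finset.mem_Icc.mp hτ).1)
        (Finset.mem_Icc.mpr ⟨le_rfl, hn⟩)
    linarith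
  intro n hn
  induction n, hn using Nat.le_induction with
  | base =>
    simp only [Finset.Icc_self, Finset.sum_singleton]
    rw [div_le_iff₀ (Real.sqrt_pos.mpr ha1)]
    nlinarith [Real.sq_sqrt ha1.le, Real.sqrt_nonneg (a 1)]
  | succ n hn ih =>
    rw [Finset.sum_Icc_succ_top (by omega : 1 ≤ n + 1)]
    have hA := hS n hn
    have hsum : ∑ τ ∈ Finset.Icc 1 (n+1), a τ = (∑ τ ∈ Finset.Icc 1 n, a τ) + a (n+1) :=
      Finset.sum_Icc_succ_top (by omega) _
    set A := ∑ τ ∈ Finset.Icc 1 n, a τ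
    set B := ∑ τ ∈ Finset.Icc 1 (n+1), a τ
    have hr := ha (n+1) (by omega)
    have hB : 0 < B := hS (n+1) (by omega)
    have hAB : A ≤ B := by rw [hsum]; linarith
    have key : a (n+1) / Real.sqrt B ≤ 2 * Real.sqrt B - 2 * Real.sqrt A := by
      rw [div_le_iff₀ (Real.sqrt_pos.mpr hB)]
      nlinarith [sq_nonneg (Real.sqrt B - Real.sqrt A), Real.sq_sqrt hA.le,
        Real.sq_sqrt hB.le, Real.sqrt_nonneg A, Real.sqrt_nonneg B,
        Real.sqrt_le_sqrt hAB, hsum]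
    linarith [ih]

lemma proj_contract {E : Type*} [NormedAddCommGroup E] [InnerProductSpace ℝ E]
    {K : Set E} (hKconv : Convex ℝ K) (p y q : E) (hp : p ∈ K) (hq : q ∈ K)
    (hmin : ∀ z ∈ K, ‖p - y‖ ≤ ‖z - y‖) : ‖p - q‖ ≤ ‖y - q‖ := by
  haveI : Nonempty K := ⟨⟨p, hp⟩⟩
  have hinf : ‖y - p‖ = ⨅ w : K, ‖y - w‖ := by
    apply le_antisymm
    · exact le_ciInf fun w => by
        rw [norm_sub_rev, norm_sub_rev y w]; exact hmin w w.2
    · refine ciInf_le ?_ (⟨p, hp⟩ : K)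
      exact ⟨0, by rintro r ⟨w, rfl⟩; exact norm_nonneg _⟩
  have hVI := (norm_eq_iInf_iff_real_inner_le_zero hKconv hp).mp hinf q hq
  have hexp : ‖y - q‖ ^ 2 = ‖y - p‖ ^ 2 + 2 * inner ℝ (y - p) (p - q) + ‖p - q‖ ^ 2 := by
    have : y - q = (y - p) + (p - q) := by abel
    rw [this, norm_add_sq_real]
  have hip : (0:ℝ) ≤ inner ℝ (y - p) (p - q) := by
    have : (inner ℝ (y - p) (p - q) : ℝ) = -(inner ℝ (y - p) (q - p) : ℝ) := by
      rw [← inner_neg_right]; congr 1; abel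
    rw [this]; linarith
  have hsq : ‖p - q‖ ^ 2 ≤ ‖y - q‖ ^ 2 := by nlinarith [sq_nonneg ‖y - p‖]
  calc ‖p - q‖ = Real.sqrt (‖p - q‖ ^ 2) := (Real.sqrt_sq (norm_nonneg _)).symm
    _ ≤ Real.sqrt (‖y - q‖ ^ 2) := Real.sqrt_le_sqrt hsq
    _ = ‖y - q‖ := Real.sqrt_sq (norm_nonneg _)

set_option maxHeartbeats 1000000 in
theorem adangd_two_inv_sq_sum_bound
    {d : ℕ} (T : ℕ) (hT : 1 ≤ T) (β : ℝ)
    (K : Set (EuclideanSpace ℝ (Fin d)))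
    (hKne : K.Nonempty) (hKcl : IsClosed K) (hKbdd : Bornology.IsBounded K)
    (hKconv : Convex ℝ K)
    (proj : EuclideanSpace ℝ (Fin d) → EuclideanSpace ℝ (Fin d))
    (hproj_mem : ∀ y, proj y ∈ K)
    (hproj_min : ∀ y, ∀ z ∈ K, ‖proj y - y‖ ≤ ‖z - y‖)
    (D : ℝ) (hD : D = Metric.diam K)
    (f : EuclideanSpace ℝ (Fin d) → ℝ)
    (hdiff : Differentiable ℝ f)
    (hconv : ∀ x y, f x + (inner ℝ (gradient f x) (y - x) : ℝ) ≤ f y)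
    (hsmooth : ∀ x y, f y ≤ f x + (inner ℝ (gradient f x) (y - x) : ℝ) + (β / 2) * ‖x - y‖ ^ 2)
    (xstar : EuclideanSpace ℝ (Fin d)) (hxstarK : xstar ∈ K)
    (hmin : ∀ y, f xstar ≤ f y)
    (x : ℕ → EuclideanSpace ℝ (Fin d)) (g : ℕ → EuclideanSpace ℝ (Fin d)) (η : ℕ → ℝ)
    (hx1 : x 1 ∈ K)
    (hg : ∀ t, g t = gradient f (x t))
    (hgne : ∀ t ∈ Finset.Icc 1 T, g t ≠ 0)
    (hη : ∀ t, η t = D / Real.sqrt (2 * ∑ τ ∈ Finset.Icc 1 t, (‖g τ‖ ^ 2)⁻¹))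
    (hupd : ∀ t ∈ Finset.Icc 1 T, x (t + 1) = proj (x t - (η t / ‖g t‖ ^ 2) • g t))
    :
    (T : ℝ) ≤ 2 * Real.sqrt 2 * β * D *
      Real.sqrt (∑ t ∈ Finset.Icc 1 T, (‖g t‖ ^ 2)⁻¹) := by
  have hmem1 : (1:ℕ) ∈ Finset.Icc 1 T := Finset.mem_Icc.mpr ⟨le_rfl, hT⟩
  have hgnorm : ∀ t ∈ Finset.Icc 1 T, 0 < ‖g t‖ := fun t ht => norm_pos_iff.mpr (hgne t ht)
  -- one-step smoothness estimate
  have hstep : ∀ (u : EuclideanSpace ℝ (Fin d)) (ε : ℝ),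
      f xstar ≤ f u - ε * ‖gradient f u‖ ^ 2 + β / 2 * (ε ^ 2 * ‖gradient f u‖ ^ 2) := by
    intro u ε
    have h2 := hsmooth u (u - ε • gradient f u)
    have h3 := hmin (u - ε • gradient f u)
    have hin : (inner ℝ (gradient f u) ((u - ε • gradient f u) - u) : ℝ)
        = -(ε * ‖gradient f u‖ ^ 2) := by
      have e : (u - ε • gradient f u) - u = (-ε) • gradient f u := by
        rw [neg_smul]; abel
      rw [e, real_inner_smul_right, real_inner_self_eq_norm_sq]; ring
    have hnr : ‖u - (u - ε • gradient f u)‖ ^ 2 = ε ^ 2 * ‖gradient f u‖ ^ 2 := by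
      have e : u - (u - ε • gradient f u) = ε • gradient f u := by abel
      rw [e, norm_smul, mul_pow, Real.norm_eq_abs, sq_abs]
    rw [hin, hnr] at h2
    linarith
  -- β is positive
  have hβpos : 0 < β := by
    by_contra hβ
    push_neg at hβ
    have hgpos : 0 < ‖g 1‖ := hgnorm 1 hmem1
    have hG : (0:ℝ) < ‖g 1‖ ^ 2 := by positivity
    set ε : ℝ := (f (x 1) - f xstar + 1) / ‖g 1‖ ^ 2 with hε
    have h := hstep (x 1) ε
    rw [← hg 1] at h
    have e1 : ε * ‖g 1‖ ^ 2 = f (x 1) - f xstar + 1 := div_mul_cancel₀ _ (ne_of_gt hG)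
    have e2 : β / 2 * (ε ^ 2 * ‖g 1‖ ^ 2) ≤ 0 := by
      apply mul_nonpos_of_nonpos_of_nonneg
      · linarith
      · positivity
    linarith
  -- gradient norm bound via smoothness
  have hgradb : ∀ u, ‖gradient f u‖ ^ 2 ≤ 2 * β * (f u - f xstar) := by
    intro u
    have h := hstep u β⁻¹
    have hβ' : β ≠ 0 := ne_of_gt hβpos
    have e : β⁻¹ * ‖gradient f u‖ ^ 2 - β / 2 * ((β⁻¹) ^ 2 * ‖gradient f u‖ ^ 2)
        = ‖gradient f u‖ ^ 2 / (2 * β) := by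
      field_simp
      ring
    have h' : ‖gradient f u‖ ^ 2 / (2 * β) ≤ f u - f xstar := by linarith
    have h'' := (div_le_iff₀ (by positivity : (0:ℝ) < 2 * β)).mp h'
    nlinarith [h'']
  -- iterates stay in K
  have hxK : ∀ t, 1 ≤ t → t ≤ T + 1 → x t ∈ K := by
    intro t h1 h2
    match t, h1 with
    | 1, _ => exact hx1
    | (s+2), _ =>
      rw [hupd (s+1) (Finset.mem_Icc.mpr ⟨by omega, by omega⟩)]
      exact hproj_mem _
  have hD0 : 0 ≤ D := hD ▸ Metric.diam_nonneg
  have hbD : ∀ t, 1 ≤ t → t ≤ T + 1 → ‖x t - xstar‖ ^ 2 ≤ D ^ 2 := by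
    intro t h1 h2
    have h3 : dist (x t) xstar ≤ D := hD ▸ Metric.dist_le_diam_of_mem hKbdd (hxK t h1 h2) hxstarK
    rw [← dist_eq_norm]
    exact pow_le_pow_left₀ dist_nonneg h3 2
  have hDpos : 0 < D := by
    rcases lt_or_eq_of_le hD0 with h | h
    · exact h
    · exfalso
      have h1 : dist (x 1) xstar ≤ D := hD ▸ Metric.dist_le_diam_of_mem hKbdd hx1 hxstarK
      have h2 : x 1 = xstar := dist_eq_zero.mp (le_antisymm (by linarith) dist_nonneg)
      have h3 := hgradb (x 1)
      rw [← hg 1, h2] at h3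
      have hgpos : 0 < ‖g 1‖ := hgnorm 1 hmem1
      nlinarith
  -- sums of inverse squared gradient norms
  have hann : ∀ τ : ℕ, (0:ℝ) ≤ (‖g τ‖ ^ 2)⁻¹ := fun τ => by positivity
  have hSpos : ∀ t, 1 ≤ t → (0:ℝ) < ∑ τ ∈ Finset.Icc 1 t, (‖g τ‖ ^ 2)⁻¹ := by
    intro t ht
    have hgpos : 0 < ‖g 1‖ := hgnorm 1 hmem1
    have h1 : (0:ℝ) < (‖g 1‖ ^ 2)⁻¹ := by positivity
    have h2 : (‖g 1‖ ^ 2)⁻¹ ≤ ∑ τ ∈ Finset.Icc 1 t, (‖g τ‖ ^ 2)⁻¹ :=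
      Finset.single_le_sum (fun τ _ => hann τ) (Finset.mem_Icc.mpr ⟨le_rfl, ht⟩)
    linarith
  have hSmono : ∀ t : ℕ, (∑ τ ∈ Finset.Icc 1 t, (‖g τ‖ ^ 2)⁻¹)
      ≤ ∑ τ ∈ Finset.Icc 1 (t+1), (‖g τ‖ ^ 2)⁻¹ := by
    intro t
    rw [Finset.sum_Icc_succ_top (by omega : 1 ≤ t + 1)]
    linarith [hann (t+1)]
  have hηpos : ∀ t, 1 ≤ t → 0 < η t := by
    intro t ht
    rw [hη t]
    have := hSpos t ht
    positivity
  -- the key per-step inequality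
  have key : ∀ t ∈ Finset.Icc 1 T,
      1 / (2 * β) ≤ (‖x t - xstar‖ ^ 2 - ‖x (t+1) - xstar‖ ^ 2) * (2 * η t)⁻¹
        + η t / 2 * (‖g t‖ ^ 2)⁻¹ := by
    intro t ht
    obtain ⟨ht1, htT⟩ := Finset.mem_Icc.mp ht
    have hgp : 0 < ‖g t‖ := hgnorm t ht
    have hG : (0:ℝ) < ‖g t‖ ^ 2 := by positivity
    have hGne : (‖g t‖ ^ 2 : ℝ) ≠ 0 := ne_of_gt hG
    have hηt : 0 < η t := hηpos t ht1
    set u : EuclideanSpace ℝ (Fin d) := x t - (η t / ‖g t‖ ^ 2) • g t with hu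
    have hcontract : ‖x (t+1) - xstar‖ ≤ ‖u - xstar‖ := by
      rw [hupd t ht]
      exact proj_contract hKconv (proj u) u xstar (hproj_mem u) hxstarK
        (fun z hz => hproj_min u z hz)
    have hexp : ‖u - xstar‖ ^ 2 = ‖x t - xstar‖ ^ 2
        - 2 * (η t / ‖g t‖ ^ 2) * (inner ℝ (g t) (x t - xstar) : ℝ)
        + η t ^ 2 * (‖g t‖ ^ 2)⁻¹ := by
      have e : u - xstar = (x t - xstar) - (η t / ‖g t‖ ^ 2) • g t := by
        rw [hu]; abel
      rw [e, norm_sub_sq_real, real_inner_smul_right, norm_smul, Real.norm_eq_abs,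
        mul_pow, sq_abs, real_inner_comm]
      field_simp
    have hlow : ‖g t‖ ^ 2 ≤ 2 * β * (inner ℝ (g t) (x t - xstar) : ℝ) := by
      have h1 := hgradb (x t)
      rw [← hg t] at h1
      have h2 := hconv (x t) xstar
      rw [← hg t] at h2
      have h3 : (inner ℝ (g t) (xstar - x t) : ℝ) = -(inner ℝ (g t) (x t - xstar) : ℝ) := by
        rw [← inner_neg_right]; congr 1; abel
      rw [h3] at h2
      nlinarith [mul_le_mul_of_nonneg_left
        (by linarith : f (x t) - f xstar ≤ (inner ℝ (g t) (x t - xstar) : ℝ))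
        (by positivity : (0:ℝ) ≤ 2 * β)]
    have hb2 : ‖x (t+1) - xstar‖ ^ 2 ≤ ‖u - xstar‖ ^ 2 :=
      pow_le_pow_left₀ (norm_nonneg _) hcontract 2
    have hc : (0:ℝ) ≤ η t / ‖g t‖ ^ 2 := by positivity
    have e1 : η t / ‖g t‖ ^ 2 * ‖g t‖ ^ 2 = η t := div_mul_cancel₀ _ hGne
    have h4 := mul_le_mul_of_nonneg_left hlow hc
    rw [e1] at h4
    have h5 : ‖x (t+1) - xstar‖ ^ 2 ≤ ‖x t - xstar‖ ^ 2
        - 2 * (η t / ‖g t‖ ^ 2) * (inner ℝ (g t) (x t - xstar) : ℝ)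
        + η t ^ 2 * (‖g t‖ ^ 2)⁻¹ := by linarith [hb2, hexp.le]
    have key1 : η t / β ≤ ‖x t - xstar‖ ^ 2 - ‖x (t+1) - xstar‖ ^ 2
        + η t ^ 2 * (‖g t‖ ^ 2)⁻¹ := by
      rw [div_le_iff₀ hβpos]
      have h6 := mul_le_mul_of_nonneg_left h5 hβpos.le
      ring_nf at h6 h4 ⊢
      linarith [h6, h4]
    have h7 := mul_le_mul_of_nonneg_right key1
      (by positivity : (0:ℝ) ≤ (2 * η t)⁻¹)
    have e3 : η t / β * (2 * η t)⁻¹ = 1 / (2 * β) := by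
      field_simp
    have e4 : (‖x t - xstar‖ ^ 2 - ‖x (t+1) - xstar‖ ^ 2 + η t ^ 2 * (‖g t‖ ^ 2)⁻¹)
        * (2 * η t)⁻¹
        = (‖x t - xstar‖ ^ 2 - ‖x (t+1) - xstar‖ ^ 2) * (2 * η t)⁻¹
          + η t / 2 * (‖g t‖ ^ 2)⁻¹ := by
      field_simp
    rw [e3, e4] at h7
    exact h7
  -- sum the per-step inequality
  have hsum := Finset.sum_le_sum key
  rw [Finset.sum_const, Nat.card_Icc, Finset.sum_add_distrib] at hsum
  simp only [Nat.add_sub_cancel, nsmul_eq_mul] at hsum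
  -- telescoping part
  have htel : ∑ t ∈ Finset.Icc 1 T,
      (‖x t - xstar‖ ^ 2 - ‖x (t+1) - xstar‖ ^ 2) * (2 * η t)⁻¹
      ≤ D ^ 2 * (2 * η T)⁻¹ := by
    have h := tele_bound T (fun t => ‖x t - xstar‖ ^ 2) (fun t => (2 * η t)⁻¹) (D ^ 2)
      (fun t h1 h2 => ⟨by positivity, hbD t h1 h2⟩)
      (fun t h1 => by
        have := hηpos t h1
        positivity)
      (fun t h1 h2 => by
        have hη1 : 0 < η t := hηpos t h1
        have hη2 : 0 < η (t+1) := hηpos (t+1) (by omega)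
        have hle : η (t+1) ≤ η t := by
          rw [hη t, hη (t+1)]
          have hs1 : (0:ℝ) < 2 * ∑ τ ∈ Finset.Icc 1 t, (‖g τ‖ ^ 2)⁻¹ := by
            linarith [hSpos t h1]
          exact div_le_div_of_nonneg_left hDpos.le (Real.sqrt_pos.mpr hs1)
            (Real.sqrt_le_sqrt (by linarith [hSmono t]))
        have : (0:ℝ) < 2 * η (t+1) := by linarith
        apply inv_anti₀ this (by linarith))
      T hT le_rfl
    have hb1 : (0:ℝ) ≤ ‖x (T+1) - xstar‖ ^ 2 := by positivity
    have hc1 : (0:ℝ) ≤ (2 * η T)⁻¹ := by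
      have := hηpos T hT
      positivity
    nlinarith [h, mul_nonneg hb1 hc1]
  -- second sum
  have hs2 : ∑ t ∈ Finset.Icc 1 T, η t / 2 * (‖g t‖ ^ 2)⁻¹
      ≤ D / (2 * Real.sqrt 2) *
        (2 * Real.sqrt (∑ τ ∈ Finset.Icc 1 T, (‖g τ‖ ^ 2)⁻¹)) := by
    have hterm : ∀ t ∈ Finset.Icc 1 T, η t / 2 * (‖g t‖ ^ 2)⁻¹
        = D / (2 * Real.sqrt 2) *
          ((‖g t‖ ^ 2)⁻¹ / Real.sqrt (∑ τ ∈ Finset.Icc 1 t, (‖g τ‖ ^ 2)⁻¹)) := by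
      intro t ht
      obtain ⟨ht1, htT⟩ := Finset.mem_Icc.mp ht
      have hSt := hSpos t ht1
      have hsq : Real.sqrt (2 * ∑ τ ∈ Finset.Icc 1 t, (‖g τ‖ ^ 2)⁻¹)
          = Real.sqrt 2 * Real.sqrt (∑ τ ∈ Finset.Icc 1 t, (‖g τ‖ ^ 2)⁻¹) :=
        Real.sqrt_mul (by norm_num) _
      have h2 : (0:ℝ) < Real.sqrt 2 := by positivity
      have h3 : (0:ℝ) < Real.sqrt (∑ τ ∈ Finset.Icc 1 t, (‖g τ‖ ^ 2)⁻¹) :=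
        Real.sqrt_pos.mpr hSt
      rw [hη t, hsq]
      field_simp
    rw [Finset.sum_congr rfl hterm, ← Finset.mul_sum]
    apply mul_le_mul_of_nonneg_left _ (by positivity)
    exact sqrt_sum_bound (fun τ => (‖g τ‖ ^ 2)⁻¹) (fun τ _ => hann τ)
      (by have := hgnorm 1 hmem1; positivity) T hT
  -- evaluate the telescoped bound
  have hcT : D ^ 2 * (2 * η T)⁻¹
      = D / 2 * (Real.sqrt 2 * Real.sqrt (∑ τ ∈ Finset.Icc 1 T, (‖g τ‖ ^ 2)⁻¹)) := by
    have hST := hSpos T hT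
    have hsq : Real.sqrt (2 * ∑ τ ∈ Finset.Icc 1 T, (‖g τ‖ ^ 2)⁻¹)
        = Real.sqrt 2 * Real.sqrt (∑ τ ∈ Finset.Icc 1 T, (‖g τ‖ ^ 2)⁻¹) :=
      Real.sqrt_mul (by norm_num) _
    have h2 : (0:ℝ) < Real.sqrt 2 := by positivity
    have h3 : (0:ℝ) < Real.sqrt (∑ τ ∈ Finset.Icc 1 T, (‖g τ‖ ^ 2)⁻¹) :=
      Real.sqrt_pos.mpr hST
    rw [hη T, hsq]
    field_simp
  -- put everything together
  have hfin : (T:ℝ) * (1 / (2 * β))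
      ≤ Real.sqrt 2 * D * Real.sqrt (∑ τ ∈ Finset.Icc 1 T, (‖g τ‖ ^ 2)⁻¹) := by
    have h2 : (0:ℝ) < Real.sqrt 2 := by positivity
    have hsq2 : Real.sqrt 2 * Real.sqrt 2 = 2 := Real.mul_self_sqrt (by norm_num)
    calc (T:ℝ) * (1 / (2 * β)) ≤ _ + _ := hsum
      _ ≤ D ^ 2 * (2 * η T)⁻¹ + D / (2 * Real.sqrt 2) *
          (2 * Real.sqrt (∑ τ ∈ Finset.Icc 1 T, (‖g τ‖ ^ 2)⁻¹)) := by
        exact add_le_add htel hs2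
      _ = Real.sqrt 2 * D * Real.sqrt (∑ τ ∈ Finset.Icc 1 T, (‖g τ‖ ^ 2)⁻¹) := by
        rw [hcT]
        have h9 : D / (2 * Real.sqrt 2) *
            (2 * Real.sqrt (∑ τ ∈ Finset.Icc 1 T, (‖g τ‖ ^ 2)⁻¹))
            = D / 2 * (Real.sqrt 2 * Real.sqrt (∑ τ ∈ Finset.Icc 1 T, (‖g τ‖ ^ 2)⁻¹)) := by
          rw [div_mul_eq_mul_div, div_eq_iff (by positivity : (2:ℝ) * Real.sqrt 2 ≠ 0)]
          linear_combination (-D) * Real.sqrt (∑ τ ∈ Finset.Icc 1 T, (‖g τ‖ ^ 2)⁻¹) * hsq2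
        rw [h9]
        ring
  have h8 := mul_le_mul_of_nonneg_left hfin (by positivity : (0:ℝ) ≤ 2 * β)
  have e : 2 * β * ((T:ℝ) * (1 / (2 * β))) = T := by field_simp
  rw [e] at h8
  exact h8.trans_eq (by ring)
end

section
/- (Exponential growth of the inverse-squared-gradient sum along SC-AdaNGD_2 iterates, smooth case.) Let H > 0, let f : ℝ^d → ℝ be differentiable, H-strongly convex and β-smooth with ‖∇f(x)‖ ≤ G for all x ∈ K, and suppose the global minimizer x* := argmin_{x ∈ ℝ^d} f(x) belongs to K. Let x_1, …, x_T be the SC-AdaNGD_k iterates with k = 2, with g_t := ∇f(x_t) ≠ 0 for all t = 1, …, T. Then G² · Σ_{t=1}^T 1/‖g_t‖² ≥ (1/3) · e^{(H/β)T}. -/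
lemma proj_sq_contract {F : Type*} [NormedAddCommGroup F] [InnerProductSpace ℝ F]
    {K : Set F} (hKconv : Convex ℝ K)
    (proj : F → F)
    (hproj_mem : ∀ y, proj y ∈ K)
    (hproj_min : ∀ y, ∀ z ∈ K, ‖proj y - y‖ ≤ ‖z - y‖)
    (y z : F) (hz : z ∈ K) : ‖proj y - z‖ ^ 2 ≤ ‖y - z‖ ^ 2 := by
  set p := proj y with hp
  haveI : Nonempty K := ⟨⟨p, hproj_mem y⟩⟩
  have hinf : ‖y - p‖ = ⨅ w : K, ‖y - (w : F)‖ := by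
    apply le_antisymm
    · apply le_ciInf
      intro w
      rw [norm_sub_rev, show y - (w : F) = -((w : F) - y) by abel, norm_neg]
      exact hproj_min y w w.2
    · exact ciInf_le ⟨0, fun r ⟨w, hw⟩ => hw ▸ norm_nonneg _⟩ (⟨p, hproj_mem y⟩ : K)
  have hvar : ∀ w ∈ K, (inner ℝ (y - p) (w - p) : ℝ) ≤ 0 :=
    (norm_eq_iInf_iff_real_inner_le_zero hKconv (hproj_mem y)).mp hinf
  have h1 : (inner ℝ (y - p) (z - p) : ℝ) ≤ 0 := hvar z hz
  have hexp : ‖y - z‖ ^ 2 = ‖y - p‖ ^ 2 + 2 * (inner ℝ (y - p) (p - z) : ℝ) + ‖p - z‖ ^ 2 := by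
    have := norm_add_sq_real (y - p) (p - z)
    rw [show y - p + (p - z) = y - z by abel] at this
    linarith
  have h2 : (0 : ℝ) ≤ inner ℝ (y - p) (p - z) := by
    have : (inner ℝ (y - p) (p - z) : ℝ) = - inner ℝ (y - p) (z - p) := by
      rw [show p - z = -(z - p) by abel, inner_neg_right]
    linarith
  nlinarith [sq_nonneg ‖y - p‖]

noncomputable def Ssum {d : ℕ} (g : ℕ → EuclideanSpace ℝ (Fin d)) (t : ℕ) : ℝ :=
  ∑ τ ∈ Finset.Icc 1 t, (‖g τ‖ ^ 2)⁻¹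

lemma Ssum_zero {d : ℕ} (g : ℕ → EuclideanSpace ℝ (Fin d)) : Ssum g 0 = 0 := by
  simp [Ssum]

lemma Ssum_rec {d : ℕ} (g : ℕ → EuclideanSpace ℝ (Fin d)) (t : ℕ) (ht : 1 ≤ t) :
    Ssum g t = Ssum g (t - 1) + (‖g t‖ ^ 2)⁻¹ := by
  cases t with
  | zero => omega
  | succ s => simp [Ssum, Finset.sum_Icc_succ_top (by omega : 1 ≤ s + 1)]

set_option maxHeartbeats 1000000 in
theorem sc_adangd_two_exp_growth
    {d : ℕ} (T : ℕ) (hT : 1 ≤ T) (H G β : ℝ) (hH : 0 < H)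
    (K : Set (EuclideanSpace ℝ (Fin d)))
    (hKne : K.Nonempty) (hKcl : IsClosed K) (hKbdd : Bornology.IsBounded K)
    (hKconv : Convex ℝ K)
    (proj : EuclideanSpace ℝ (Fin d) → EuclideanSpace ℝ (Fin d))
    (hproj_mem : ∀ y, proj y ∈ K)
    (hproj_min : ∀ y, ∀ z ∈ K, ‖proj y - y‖ ≤ ‖z - y‖)
    (f : EuclideanSpace ℝ (Fin d) → ℝ)
    (hdiff : Differentiable ℝ f)
    (hsc : ∀ x y, f x + (inner ℝ (gradient f x) (y - x) : ℝ) + (H / 2) * ‖x - y‖ ^ 2 ≤ f y)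
    (hsmooth : ∀ x y, f y ≤ f x + (inner ℝ (gradient f x) (y - x) : ℝ) + (β / 2) * ‖x - y‖ ^ 2)
    (hG : ∀ x ∈ K, ‖gradient f x‖ ≤ G)
    (xstar : EuclideanSpace ℝ (Fin d)) (hxstarK : xstar ∈ K)
    (hmin : ∀ y, f xstar ≤ f y)
    (x : ℕ → EuclideanSpace ℝ (Fin d)) (g : ℕ → EuclideanSpace ℝ (Fin d)) (η : ℕ → ℝ)
    (hx1 : x 1 ∈ K)
    (hg : ∀ t, g t = gradient f (x t))
    (hgne : ∀ t ∈ Finset.Icc 1 T, g t ≠ 0)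
    (hη : ∀ t, η t = 1 / (H * ∑ τ ∈ Finset.Icc 1 t, (‖g τ‖ ^ 2)⁻¹))
    (hupd : ∀ t ∈ Finset.Icc 1 T, x (t + 1) = proj (x t - (η t / ‖g t‖ ^ 2) • g t))
    :
    (1 / 3) * Real.exp ((H / β) * T) ≤
      G ^ 2 * ∑ t ∈ Finset.Icc 1 T, (‖g t‖ ^ 2)⁻¹ := by
  have h1T : (1 : ℕ) ∈ Finset.Icc 1 T := by simp [hT]
  have hg1 : g 1 ≠ 0 := hgne 1 h1T
  have hg1norm : 0 < ‖g 1‖ := norm_pos_iff.mpr hg1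
  -- β is positive and at least H
  have hHβ : H ≤ β := by
    have h1 := hsc (x 1) (x 1 + g 1)
    have h2 := hsmooth (x 1) (x 1 + g 1)
    have hn : ‖x 1 - (x 1 + g 1)‖ ^ 2 = ‖g 1‖ ^ 2 := by
      rw [show x 1 - (x 1 + g 1) = -(g 1) by abel, norm_neg]
    rw [hn] at h1 h2
    nlinarith [pow_pos hg1norm 2]
  have hβ : 0 < β := lt_of_lt_of_le hH hHβ
  -- all iterates in K
  have hxK : ∀ t, 1 ≤ t → t ≤ T + 1 → x t ∈ K := by
    intro t ht1 ht2
    rcases eq_or_lt_of_le ht1 with h | h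
    · rwa [← h]
    · obtain ⟨s, rfl⟩ : ∃ s, t = s + 1 := ⟨t - 1, by omega⟩
      rw [hupd s (by simp [Finset.mem_Icc]; omega)]
      exact hproj_mem _
  -- positivity facts
  have hgpos : ∀ t, 1 ≤ t → t ≤ T → 0 < ‖g t‖ :=
    fun t h1 h2 => norm_pos_iff.mpr (hgne t (by simp [Finset.mem_Icc]; omega))
  have hGpos : 0 < G := lt_of_lt_of_le hg1norm (by rw [hg 1]; exact hG (x 1) hx1)
  have hSpos : ∀ t, 1 ≤ t → t ≤ T → 0 < Ssum g t := by
    intro t h1 h2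
    apply Finset.sum_pos
    · intro τ hτ
      rw [Finset.mem_Icc] at hτ
      exact inv_pos.mpr (pow_pos (hgpos τ hτ.1 (le_trans hτ.2 h2)) 2)
    · exact ⟨1, by simp [Finset.mem_Icc, h1]⟩
  -- gradient dominance from smoothness
  have hgap : ∀ t, 1 ≤ t → t ≤ T → ‖g t‖ ^ 2 / (2 * β) ≤ f (x t) - f xstar := by
    intro t h1 h2
    have hm := hmin (x t - β⁻¹ • g t)
    have hs := hsmooth (x t) (x t - β⁻¹ • g t)
    rw [← hg t] at hs
    have e1 : x t - β⁻¹ • g t - x t = (-β⁻¹) • g t := by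
      rw [neg_smul]; abel
    have e2 : (inner ℝ (g t) ((-β⁻¹) • g t) : ℝ) = -β⁻¹ * ‖g t‖ ^ 2 := by
      rw [real_inner_smul_right, real_inner_self_eq_norm_sq]
    have e3 : ‖x t - (x t - β⁻¹ • g t)‖ ^ 2 = β⁻¹ ^ 2 * ‖g t‖ ^ 2 := by
      rw [show x t - (x t - β⁻¹ • g t) = β⁻¹ • g t by abel, norm_smul]
      rw [Real.norm_eq_abs, abs_of_pos (inv_pos.mpr hβ)]
      ring
    rw [e1, e2, e3] at hs
    have hβne : β ≠ 0 := ne_of_gt hβ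
    have : f xstar ≤ f (x t) + -β⁻¹ * ‖g t‖ ^ 2 + β / 2 * (β⁻¹ ^ 2 * ‖g t‖ ^ 2) :=
      le_trans hm hs
    have key : -β⁻¹ * ‖g t‖ ^ 2 + β / 2 * (β⁻¹ ^ 2 * ‖g t‖ ^ 2) = -(‖g t‖ ^ 2 / (2 * β)) := by
      field_simp
      ring
    linarith [this, key.le, key.ge]
  -- inner product lower bound from strong convexity
  have hip : ∀ t, 1 ≤ t → t ≤ T →
      ‖g t‖ ^ 2 / (2 * β) + (H / 2) * ‖x t - xstar‖ ^ 2 ≤ (inner ℝ (g t) (x t - xstar) : ℝ) := by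
    intro t h1 h2
    have hs := hsc (x t) xstar
    rw [← hg t] at hs
    have e : (inner ℝ (g t) (xstar - x t) : ℝ) = - inner ℝ (g t) (x t - xstar) := by
      rw [show xstar - x t = -(x t - xstar) by abel, inner_neg_right]
    rw [e] at hs
    have := hgap t h1 h2
    linarith
  -- the per-step inequality
  have hstep : ∀ t, 1 ≤ t → t ≤ T →
      H * Ssum g t * ‖x (t + 1) - xstar‖ ^ 2 + 1 / β ≤
      H * Ssum g (t - 1) * ‖x t - xstar‖ ^ 2 + (‖g t‖ ^ 2)⁻¹ / (H * Ssum g t) := by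
    intro t h1 h2
    have hgt : 0 < ‖g t‖ := hgpos t h1 h2
    have hrec0 : Ssum g t = Ssum g (t - 1) + (‖g t‖ ^ 2)⁻¹ := Ssum_rec g t h1
    have hηt : η t = 1 / (H * Ssum g t) := hη t
    have hipt := hip t h1 h2
    -- contraction + expansion, with c the step size
    obtain ⟨c, hcval⟩ : ∃ c : ℝ, η t / ‖g t‖ ^ 2 = c := ⟨_, rfl⟩
    have hcontr : ‖x (t + 1) - xstar‖ ^ 2 ≤ ‖(x t - c • g t) - xstar‖ ^ 2 := by
      rw [hupd t (by simp [Finset.mem_Icc]; omega), hcval]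
      exact proj_sq_contract hKconv proj hproj_mem hproj_min _ _ hxstarK
    have hexpand : ‖(x t - c • g t) - xstar‖ ^ 2 =
        ‖x t - xstar‖ ^ 2 - 2 * c * (inner ℝ (g t) (x t - xstar) : ℝ) + c ^ 2 * ‖g t‖ ^ 2 := by
      rw [show (x t - c • g t) - xstar = (x t - xstar) - c • g t by abel, norm_sub_sq_real,
        real_inner_smul_right, real_inner_comm, norm_smul, Real.norm_eq_abs, mul_pow, sq_abs]
      ring
    rw [hexpand] at hcontr
    -- make all quantities opaque
    obtain ⟨s', hS'⟩ : ∃ s', Ssum g (t - 1) = s' := ⟨_, rfl⟩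
    obtain ⟨s, hs⟩ : ∃ s, Ssum g t = s := ⟨_, rfl⟩
    obtain ⟨N, hN⟩ : ∃ N, ‖g t‖ ^ 2 = N := ⟨_, rfl⟩
    obtain ⟨a, ha⟩ : ∃ a, ‖x t - xstar‖ ^ 2 = a := ⟨_, rfl⟩
    obtain ⟨a', ha'⟩ : ∃ a', ‖x (t + 1) - xstar‖ ^ 2 = a' := ⟨_, rfl⟩
    obtain ⟨ip, hip'⟩ : ∃ ip : ℝ, (inner ℝ (g t) (x t - xstar) : ℝ) = ip := ⟨_, rfl⟩
    rw [hs, hS', hN, ha, ha'] 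
    rw [hN, ha, ha', hip'] at hcontr
    rw [hN, ha, hip'] at hipt
    rw [hs] at hrec0 hηt
    rw [hN, hS'] at hrec0
    rw [hηt, hN] at hcval
    have hNpos : 0 < N := hN ▸ pow_pos hgt 2
    have hspos : 0 < s := hs ▸ hSpos t h1 h2
    have hanneg : 0 ≤ a := ha ▸ sq_nonneg _
    have hHs : 0 < H * s := mul_pos hH hspos
    have hcval2 : c = N⁻¹ / (H * s) := by rw [← hcval]; rw [div_div, one_div, mul_inv, div_eq_mul_inv, mul_comm]
    have hcpos : 0 < c := by rw [hcval2]; positivity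
    -- combine
    have key : a' ≤ a - 2 * c * (N / (2 * β) + (H / 2) * a) + c ^ 2 * N := by
      nlinarith [mul_le_mul_of_nonneg_left hipt (le_of_lt (mul_pos two_pos hcpos))]
    have hcHs : c * (H * s) = N⁻¹ := by
      rw [hcval2]; field_simp
    have hmul := mul_le_mul_of_nonneg_left key (le_of_lt hHs)
    have e1 : H * s * (a - 2 * c * (N / (2 * β) + (H / 2) * a) + c ^ 2 * N) =
        H * s * a - (c * (H * s)) * (N / β) - (c * (H * s)) * (H * a) + (c * (H * s)) * (c * N) := by
      ring
    rw [e1, hcHs] at hmul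
    have hNne : N ≠ 0 := ne_of_gt hNpos
    have e2 : N⁻¹ * (N / β) = 1 / β := by field_simp
    have e3 : N⁻¹ * (c * N) = c := by field_simp
    rw [e2, e3] at hmul
    have hrecle : s - N⁻¹ = s' := by linarith [hrec0]
    have efin : H * s * a - N⁻¹ * (H * a) = H * s' * a := by rw [← hrecle]; ring
    rw [hcval2] at hmul
    linarith [hmul, efin.le, efin.ge]
  -- telescoping
  have htel : ∀ n, n ≤ T →
      H * Ssum g n * ‖x (n + 1) - xstar‖ ^ 2 + n / β ≤
      ∑ t ∈ Finset.Icc 1 n, (‖g t‖ ^ 2)⁻¹ / (H * Ssum g t) := by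
    intro n
    induction n with
    | zero => intro _; simp [Ssum_zero]
    | succ m ih =>
      intro hm
      have ihm := ih (by omega)
      have hstepm := hstep (m + 1) (by omega) hm
      have hred : Ssum g (m + 1 - 1) = Ssum g m := by norm_num
      rw [hred] at hstepm
      rw [Finset.sum_Icc_succ_top (by omega : 1 ≤ m + 1)]
      push_cast
      have hdiv : ((m : ℝ) + 1) / β = (m : ℝ) / β + 1 / β := by ring
      linarith [hdiv.le, hdiv.ge]
  have hT1 : (T : ℝ) / β ≤ ∑ t ∈ Finset.Icc 1 T, (‖g t‖ ^ 2)⁻¹ / (H * Ssum g t) := by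
    have h0 : 0 ≤ H * Ssum g T * ‖x (T + 1) - xstar‖ ^ 2 :=
      mul_nonneg (mul_nonneg hH.le (hSpos T hT le_rfl).le) (sq_nonneg _)
    linarith [htel T le_rfl]
  have hHsum : H * (T : ℝ) / β ≤ ∑ t ∈ Finset.Icc 1 T, (‖g t‖ ^ 2)⁻¹ / Ssum g t := by
    have hmul := mul_le_mul_of_nonneg_left hT1 hH.le
    rw [Finset.mul_sum] at hmul
    have hsc2 : ∑ t ∈ Finset.Icc 1 T, H * ((‖g t‖ ^ 2)⁻¹ / (H * Ssum g t)) =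
        ∑ t ∈ Finset.Icc 1 T, (‖g t‖ ^ 2)⁻¹ / Ssum g t := by
      apply Finset.sum_congr rfl
      intro t ht
      rw [Finset.mem_Icc] at ht
      have hSt := hSpos t ht.1 ht.2
      obtain ⟨u, hu⟩ : ∃ u, (‖g t‖ ^ 2)⁻¹ = u := ⟨_, rfl⟩
      obtain ⟨v, hv⟩ : ∃ v, Ssum g t = v := ⟨_, rfl⟩
      rw [hv] at hSt
      rw [hu, hv]
      field_simp
    rw [hsc2] at hmul
    calc H * (T : ℝ) / β = H * ((T : ℝ) / β) := by ring
      _ ≤ _ := hmul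
  -- logarithmic bound on the sum
  have hlog : ∀ n, 1 ≤ n → n ≤ T →
      ∑ t ∈ Finset.Icc 1 n, (‖g t‖ ^ 2)⁻¹ / Ssum g t ≤
        1 + Real.log (Ssum g n) - Real.log (Ssum g 1) := by
    intro n hn
    induction n, hn using Nat.le_induction with
    | base =>
      intro h1T'
      have hS1 : Ssum g 1 = (‖g 1‖ ^ 2)⁻¹ := by simp [Ssum]
      have hb1 : (0 : ℝ) < (‖g 1‖ ^ 2)⁻¹ := inv_pos.mpr (pow_pos hg1norm 2)
      rw [Finset.Icc_self, Finset.sum_singleton, hS1, div_self (ne_of_gt hb1)]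
      simp
    | succ m hm ih =>
      intro hmT
      have hmT' : m ≤ T := by omega
      have ihm := ih hmT'
      have hSm := hSpos m hm hmT'
      have hSm1 := hSpos (m + 1) (by omega) hmT
      have hrec : Ssum g (m + 1) = Ssum g m + (‖g (m + 1)‖ ^ 2)⁻¹ := by
        have := Ssum_rec g (m + 1) (by omega)
        simpa using this
      have hlog1 : Real.log (Ssum g m / Ssum g (m + 1)) ≤ Ssum g m / Ssum g (m + 1) - 1 :=
        Real.log_le_sub_one_of_pos (div_pos hSm hSm1)
      rw [Real.log_div (ne_of_gt hSm) (ne_of_gt hSm1)] at hlog1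
      have hterm : (‖g (m + 1)‖ ^ 2)⁻¹ / Ssum g (m + 1) ≤
          Real.log (Ssum g (m + 1)) - Real.log (Ssum g m) := by
        obtain ⟨u, hu⟩ : ∃ u, (‖g (m + 1)‖ ^ 2)⁻¹ = u := ⟨_, rfl⟩
        obtain ⟨v, hv⟩ : ∃ v, Ssum g m = v := ⟨_, rfl⟩
        obtain ⟨w, hw⟩ : ∃ w, Ssum g (m + 1) = w := ⟨_, rfl⟩
        rw [hu, hv, hw] at hrec ⊢
        rw [hv] at hSm
        rw [hw] at hSm1
        rw [hv, hw] at hlog1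
        have e : u / w = 1 - v / w := by
          field_simp
          linarith [hrec]
        rw [e]; linarith
      rw [Finset.sum_Icc_succ_top (by omega : 1 ≤ m + 1)]
      linarith
  -- combine everything
  have hST := hSpos T hT le_rfl
  have hlogT := hlog T hT le_rfl
  have hS1 : Ssum g 1 = (‖g 1‖ ^ 2)⁻¹ := by simp [Ssum]
  have hg1G : ‖g 1‖ ^ 2 ≤ G ^ 2 := by
    apply pow_le_pow_left₀ (norm_nonneg _) _ 2
    rw [hg 1]; exact hG (x 1) hx1
  have hlogS1 : -Real.log (Ssum g 1) ≤ Real.log (G ^ 2) := by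
    rw [hS1, Real.log_inv, neg_neg]
    exact Real.log_le_log (pow_pos hg1norm 2) hg1G
  have hlogmul : Real.log (G ^ 2 * Ssum g T) = Real.log (G ^ 2) + Real.log (Ssum g T) :=
    Real.log_mul (ne_of_gt (pow_pos hGpos 2)) (ne_of_gt hST)
  have hfinal : (H / β) * (T : ℝ) - 1 ≤ Real.log (G ^ 2 * Ssum g T) := by
    have e : (H / β) * (T : ℝ) = H * (T : ℝ) / β := by ring
    rw [e, hlogmul]
    linarith [hHsum, hlogT, hlogS1]
  have hpos : (0 : ℝ) < G ^ 2 * Ssum g T := mul_pos (pow_pos hGpos 2) hST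
  have h13 : (1 / 3 : ℝ) ≤ (Real.exp 1)⁻¹ := by
    rw [one_div]
    apply inv_anti₀ (Real.exp_pos 1)
    linarith [Real.exp_one_lt_d9]
  show (1 / 3) * Real.exp ((H / β) * (T : ℝ)) ≤ G ^ 2 * Ssum g T
  calc (1 / 3) * Real.exp ((H / β) * (T : ℝ))
      ≤ (Real.exp 1)⁻¹ * Real.exp ((H / β) * (T : ℝ)) :=
        mul_le_mul_of_nonneg_right h13 (Real.exp_pos _).le
    _ = Real.exp ((H / β) * (T : ℝ) - 1) := by
        rw [Real.exp_sub]; ring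
    _ ≤ Real.exp (Real.log (G ^ 2 * Ssum g T)) := Real.exp_le_exp.mpr hfinal
    _ = G ^ 2 * Ssum g T := Real.exp_log hpos
end
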